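/- arXiv:1911.01687 — 9 statements merged into one kernel-verified Lean document; each statement's English description precedes it below -/
import Mathlib

section
/- Let k ≥ 1 and let τ_k be the morphism on the alphabet {1,2} with τ_k(1) = 1^{k-1}·2 and τ_k(2) = 1^{k-1}·2·1^{k+1}. Then for all n ≥ 0, the length of the word τ_k^n(1) equals W_k(n+1) = ((k+1)^{n+1} - (-1)^{n+1})/(k+2). -/
/-- The morphism `τ_k : 1 ↦ 1^{k-1}2, 2 ↦ 1^{k-1}2·1^{k+1}` on words over `{1,2}`. -/
def tauk (k : ℕ) : List ℕ → List ℕ := fun w =>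
  w.flatMap fun c =>
    if c = 1 then List.replicate (k - 1) 1 ++ [2]
    else List.replicate (k - 1) 1 ++ [2] ++ List.replicate (k + 1) 1

lemma tauk_cons (k a : ℕ) (w : List ℕ) :
    tauk k (a :: w) =
      (if a = 1 then List.replicate (k - 1) 1 ++ [2]
       else List.replicate (k - 1) 1 ++ [2] ++ List.replicate (k + 1) 1) ++ tauk k w := by
  simp [tauk]

lemma len_tauk (k : ℕ) (hk : 1 ≤ k) (w : List ℕ) :
    (tauk k w).length = k * w.length + (k + 1) * w.countP (fun c => !decide (c = 1)) := by
  induction w with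
  | nil => simp [tauk]
  | cons a w ih =>
    rw [tauk_cons]
    by_cases h : a = 1 <;>
      simp [h, ih, List.countP_cons, Nat.mul_succ] <;> omega

lemma count_tauk (k : ℕ) (w : List ℕ) :
    (tauk k w).countP (fun c => !decide (c = 1)) = w.length := by
  induction w with
  | nil => simp [tauk]
  | cons a w ih =>
    rw [tauk_cons]
    by_cases h : a = 1 <;>
      simp [h, ih, List.countP_append, List.countP_replicate, List.countP_cons]

theorem stmt_5 (k : ℕ) (hk : 1 ≤ k) (n : ℕ) :
    (((tauk k)^[n] [1]).length : ℤ) =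
      (((k : ℤ) + 1) ^ (n + 1) - (-1) ^ (n + 1)) / ((k : ℤ) + 2) := by
  have hne : ((k : ℤ) + 2) ≠ 0 := by positivity
  have key : ∀ n : ℕ,
      ((((tauk k)^[n] [1]).length : ℤ)) * ((k : ℤ) + 2)
        = ((k : ℤ) + 1) ^ (n + 1) - (-1) ^ (n + 1) ∧
      ((((tauk k)^[n] [1]).countP (fun c => !decide (c = 1)) : ℤ)) * ((k : ℤ) + 2)
        = ((k : ℤ) + 1) ^ n - (-1) ^ n := by
    intro n
    induction n with
    | zero => simp; ring
    | succ m ih =>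
      obtain ⟨h1, h2⟩ := ih
      rw [Function.iterate_succ_apply']
      constructor
      · rw [len_tauk k hk]
        push_cast
        rw [add_mul, mul_assoc, mul_assoc, h1, h2]
        ring
      · rw [count_tauk k]
        rw [h1]
  exact (Int.ediv_eq_of_eq_mul_left hne (key n).1.symm).symm
end

section
/- Let k ≥ 1 and let τ_k be the morphism on {1,2} with τ_k(1) = 1^{k-1}·2 and τ_k(2) = 1^{k-1}·2·1^{k+1}. Then for all m ≥ 0, τ_k^{m+2}(1) = (τ_k^{m+1}(1))^k · (τ_k^m(1))^{k+1}, i.e., the word τ_k^{m+2}(1) is the concatenation of k copies of τ_k^{m+1}(1) followed by k+1 copies of τ_k^m(1). -/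
lemma tauk_append (k : ℕ) (u v : List ℕ) :
    tauk k (u ++ v) = tauk k u ++ tauk k v := by
  simp [tauk]

lemma tauk_iter_append (k n : ℕ) (u v : List ℕ) :
    (tauk k)^[n] (u ++ v) = (tauk k)^[n] u ++ (tauk k)^[n] v := by
  induction n generalizing u v with
  | zero => simp
  | succ n ih => simp [Function.iterate_succ_apply, tauk_append, ih]

lemma tauk_one (k : ℕ) : tauk k [1] = List.replicate (k - 1) 1 ++ [2] := by
  simp [tauk]

lemma tauk_two (k : ℕ) : tauk k [2] = tauk k [1] ++ List.replicate (k + 1) 1 := by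
  simp [tauk]

lemma tauk_iter_replicate_one (k n j : ℕ) :
    (tauk k)^[n] (List.replicate j 1) =
      (List.replicate j ((tauk k)^[n] [1])).flatten := by
  induction j with
  | zero =>
    have : (tauk k)^[n] [] = [] := by
      induction n with
      | zero => rfl
      | succ n ihn => rw [Function.iterate_succ_apply, show tauk k [] = [] from rfl, ihn]
    simpa using this
  | succ j ih =>
    have : List.replicate (j + 1) (1 : ℕ) = [1] ++ List.replicate j 1 := by
      rw [List.replicate_succ]; rfl
    rw [this, tauk_iter_append, ih, List.replicate_succ, List.flatten_cons]

theorem stmt_6 (k : ℕ) (hk : 1 ≤ k) (m : ℕ) :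
    (tauk k)^[m + 2] [1] =
      (List.replicate k ((tauk k)^[m + 1] [1])).flatten ++
        (List.replicate (k + 1) ((tauk k)^[m] [1])).flatten := by
  have h2 : (tauk k)^[m + 1] [2] =
      (tauk k)^[m + 1] [1] ++ (List.replicate (k + 1) ((tauk k)^[m] [1])).flatten := by
    rw [Function.iterate_succ_apply, tauk_two, tauk_iter_append, tauk_iter_replicate_one,
      ← Function.iterate_succ_apply]
  have h1 : (tauk k)^[m + 2] [1] =
      (List.replicate (k - 1) ((tauk k)^[m + 1] [1])).flatten ++ (tauk k)^[m + 1] [2] := by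
    rw [show m + 2 = (m + 1) + 1 from rfl, Function.iterate_succ_apply, tauk_one,
      tauk_iter_append, tauk_iter_replicate_one]
  rw [h1, h2, ← List.append_assoc]
  congr 1
  have hrep : List.replicate k ((tauk k)^[m + 1] [1]) =
      List.replicate (k - 1) ((tauk k)^[m + 1] [1]) ++ [(tauk k)^[m + 1] [1]] := by
    rw [← List.replicate_succ']
    congr 1
    omega
  rw [hrep]
  simp
end

section
/- Let k ≥ 1. Let τ_k be the morphism on {1,2} with τ_k(1) = 1^{k-1}2, τ_k(2) = 1^{k-1}2·1^{k+1}, let σ_k be the morphism on {0,1} with σ_k(0) = 0^k 1, σ_k(1) = 0^{k+1}, and let ρ_0 be the morphism 0 → 1^{k-1}2, 1 → 1^{k+1}. Then for all n ≥ 1, τ_k^{n+1}(1) = ρ_0(σ_k^n(0)). -/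
/-- The morphism `σ_k : 0 ↦ 0^k 1, 1 ↦ 0^{k+1}`. -/
def sigmak (k : ℕ) : List ℕ → List ℕ := fun w =>
  w.flatMap fun c =>
    if c = 0 then List.replicate k 0 ++ [1] else List.replicate (k + 1) 0

/-- The morphism `ρ_0 : 0 ↦ 1^{k-1}2, 1 ↦ 1^{k+1}`. -/
def rho0 (k : ℕ) : List ℕ → List ℕ := fun w =>
  w.flatMap fun c =>
    if c = 0 then List.replicate (k - 1) 1 ++ [2] else List.replicate (k + 1) 1

lemma repl_flatMap {α β : Type*} (m : ℕ) (a : α) (f : α → List β) :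
    (List.replicate m a).flatMap f = (List.replicate m (f a)).flatten := by
  induction m with
  | zero => simp
  | succ m ih => simp [List.replicate_succ, ih]

lemma comm_key (k : ℕ) (hk : 1 ≤ k) (w : List ℕ) :
    tauk k (rho0 k w) = rho0 k (sigmak k w) := by
  obtain ⟨m, rfl⟩ : ∃ m, k = m + 1 := ⟨k - 1, by omega⟩
  induction w with
  | nil => simp [tauk, rho0, sigmak]
  | cons c w ih =>
    simp only [tauk, rho0, sigmak, List.flatMap_cons, List.flatMap_append] at *
    rw [ih]
    congr 1
    by_cases hc : c = 0
    · subst hc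
      simp only [if_pos rfl, List.flatMap_append, repl_flatMap, Nat.add_sub_cancel,
        List.flatMap_cons, List.flatMap_nil]
      simp [List.replicate_succ' (n := m)]
      rw [repl_flatMap, repl_flatMap]
      simp
    · simp only [if_neg hc, repl_flatMap, Nat.add_sub_cancel]
      simp

lemma iter_comm (k : ℕ) (hk : 1 ≤ k) (n : ℕ) (w : List ℕ) :
    (tauk k)^[n] (rho0 k w) = rho0 k ((sigmak k)^[n] w) := by
  induction n generalizing w with
  | zero => simp
  | succ n ih =>
    rw [Function.iterate_succ_apply, Function.iterate_succ_apply, comm_key k hk, ih]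

theorem stmt_8 (k : ℕ) (hk : 1 ≤ k) (n : ℕ) (hn : 1 ≤ n) :
    (tauk k)^[n + 1] [1] = rho0 k ((sigmak k)^[n] [0]) := by
  have h1 : tauk k [1] = rho0 k [0] := by simp [tauk, rho0]
  rw [Function.iterate_succ_apply, h1, iter_comm k hk]
end

section
/- Let k ≥ 1 and define W_k(n) = ((k+1)^n - (-1)^n)/(k+2). Call a representation n = Σ_{j=1}^r x_j W_k(j) a valid W-expansion if each x_j ∈ {0,1,...,k}, x_r ≠ 0, and the word x_r x_{r-1} ⋯ x_1 ends with an even number (possibly zero) of letters equal to k. Then every positive integer admits a valid W-expansion. -/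
def W (k : ℤ) (n : ℕ) : ℤ := ((k + 1) ^ n - (-1) ^ n) / (k + 2)

/-- `x = [x_1, x_2, …, x_r]` (least significant digit first) is a valid `W`-expansion digit
word: nonempty, digits in `[0,k]`, leading digit `x_r ≠ 0`, and the word `x_r x_{r-1} ⋯ x_1`
ends with an even number (possibly zero) of digits equal to `k`. -/
def ValidW (k : ℕ) (x : List ℕ) : Prop :=
  x ≠ [] ∧ (∀ d ∈ x, d ≤ k) ∧ x.getLastD 0 ≠ 0 ∧
    Even ((x.takeWhile fun d => d = k).length)

/-- The value `Σ_{j=1}^r x_j W_k(j)` of a digit word `x = [x_1, …, x_r]`. -/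
def valW (k : ℕ) (x : List ℕ) : ℤ :=
  ∑ i ∈ Finset.range x.length, (x.getD i 0 : ℤ) * W k (i + 1)

lemma W_dvd (k : ℤ) (n : ℕ) : (k + 2) ∣ ((k + 1) ^ n - (-1) ^ n) := by
  have h : (k + 1) ≡ (-1) [ZMOD (k + 2)] := Int.ModEq.symm
    (Int.modEq_iff_dvd.mpr ⟨1, by ring⟩)
  exact ((h.pow n).symm).dvd

lemma W_mul (k : ℤ) (n : ℕ) : (k + 2) * W k n = (k + 1) ^ n - (-1) ^ n :=
  Int.mul_ediv_cancel' (W_dvd k n)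

lemma W_succ (k : ℤ) (hk : 0 ≤ k) (n : ℕ) :
    W k (n + 1) = (k + 1) * W k n + (-1) ^ n := by
  have h2 : (k + 2) ≠ 0 := by linarith
  apply mul_left_cancel₀ h2
  have a := W_mul k n
  have b := W_mul k (n + 1)
  have hx : (k + 2) * ((k + 1) * W k n + (-1) ^ n)
      = (k + 1) * ((k + 2) * W k n) + (k + 2) * (-1) ^ n := by ring
  rw [b, hx, a, pow_succ, pow_succ]
  ring

lemma W_one (k : ℤ) (hk : 0 ≤ k) : W k 1 = 1 := by
  have h2 : (k + 2) ≠ 0 := by linarith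
  have : ((k : ℤ) + 1) ^ 1 - (-1) ^ 1 = k + 2 := by ring
  rw [W, this, Int.ediv_self h2]

lemma W_pos (k : ℤ) (hk : 1 ≤ k) : ∀ n : ℕ, 1 ≤ W k (n + 1) := by
  intro n
  induction n with
  | zero => rw [W_one k (by linarith)]
  | succ n ih =>
    rw [W_succ k (by linarith)]
    rcases Nat.even_or_odd (n + 1) with h | h
    · rw [h.neg_one_pow]; nlinarith
    · rw [h.neg_one_pow]; nlinarith

lemma W_growth (k : ℤ) (hk : 1 ≤ k) : ∀ n : ℕ, (n : ℤ) + 1 ≤ W k (2 * n + 1) := by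
  intro n
  induction n with
  | zero => rw [W_one k (by linarith)]; norm_num
  | succ n ih =>
    have h1 : W k (2 * n + 2) = (k + 1) * W k (2 * n + 1) + (-1) ^ (2 * n + 1) :=
      W_succ k (by linarith) _
    have h2 : W k (2 * n + 3) = (k + 1) * W k (2 * n + 2) + (-1) ^ (2 * n + 2) :=
      W_succ k (by linarith) _
    have hp1 : (-1 : ℤ) ^ (2 * n + 1) = -1 := Odd.neg_one_pow ⟨n, by ring⟩
    have hp2 : (-1 : ℤ) ^ (2 * n + 2) = 1 := Even.neg_one_pow ⟨n + 1, by ring⟩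
    have hw1 := W_pos k hk (2 * n)
    have hw2 := W_pos k hk (2 * n + 1)
    have : 2 * (n + 1) + 1 = 2 * n + 3 := by ring
    rw [this]
    rw [hp1] at h1; rw [hp2] at h2
    push_cast
    nlinarith

lemma valW_nil (k : ℕ) : valW k [] = 0 := by simp [valW]

lemma valW_append (k : ℕ) (a : List ℕ) (c : ℕ) :
    valW k (a ++ [c]) = valW k a + (c : ℤ) * W k (a.length + 1) := by
  unfold valW
  rw [List.length_append, List.length_singleton, Finset.sum_range_succ]
  congr 1
  · apply Finset.sum_congr rfl
    intro i hi
    rw [List.getD_append _ _ _ _ (Finset.mem_range.mp hi)]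
  · rw [List.getD_append_right _ _ _ _ le_rfl, Nat.sub_self]
    rfl

lemma valW_replicate (k : ℕ) (hk : 1 ≤ k) : ∀ s : ℕ,
    valW k (List.replicate s k) = W k (s + 1) - 1 + (if Even s then 0 else 1) := by
  have hk' : (1 : ℤ) ≤ (k : ℤ) := by exact_mod_cast hk
  intro s
  induction s with
  | zero => simp [valW_nil, W_one (k : ℤ) (by linarith)]
  | succ s ih =>
    rw [List.replicate_succ', valW_append, List.length_replicate, ih]
    have hsucc : W (k : ℤ) (s + 1 + 1) = ((k : ℤ) + 1) * W k (s + 1) + (-1) ^ (s + 1) :=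
      W_succ (k : ℤ) (by linarith) (s + 1)
    rcases Nat.even_or_odd s with h | h
    · have hodd : Odd (s + 1) := Even.add_one h
      have hp : (-1 : ℤ) ^ (s + 1) = -1 := hodd.neg_one_pow
      rw [if_pos h, if_neg (by simpa using hodd)]
      rw [hp] at hsucc
      linarith
    · have heven : Even (s + 1) := Odd.add_one h
      have hp : (-1 : ℤ) ^ (s + 1) = 1 := heven.neg_one_pow
      rw [if_neg (by simpa using h), if_pos heven]
      rw [hp] at hsucc
      linarith

lemma key (k : ℕ) (hk : 1 ≤ k) : ∀ (r : ℕ) (n : ℤ), 0 ≤ n → n ≤ W k (r + 1) - 1 →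
    ∃ x : List ℕ, x.length = r ∧ (∀ d ∈ x, d ≤ k) ∧
      Even ((x.takeWhile fun d => d = k).length) ∧ valW k x = n := by
  have hk' : (1 : ℤ) ≤ (k : ℤ) := by exact_mod_cast hk
  intro r
  induction r with
  | zero =>
    intro n h0 h1
    rw [W_one (k : ℤ) (by linarith)] at h1
    have hn : n = 0 := by linarith
    exact ⟨[], rfl, by simp, by simp, by simp [valW_nil, hn]⟩
  | succ r ih =>
    intro n h0 h1
    have hWpos : 0 < W (k : ℤ) (r + 1) := by linarith [W_pos (k : ℤ) hk' r]
    have hdm : W (k : ℤ) (r + 1) * (n / W (k : ℤ) (r + 1)) + n % W (k : ℤ) (r + 1) = n :=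
      Int.mul_ediv_add_emod n _
    set Wr := W (k : ℤ) (r + 1) with hWrdef
    set c := n / Wr with hcdef
    set m := n % Wr with hmdef
    have hm0 : 0 ≤ m := Int.emod_nonneg n (ne_of_gt hWpos)
    have hm1 : m < Wr := Int.emod_lt_of_pos n hWpos
    have hc0 : 0 ≤ c := Int.ediv_nonneg h0 (le_of_lt hWpos)
    have hWsucc : W (k : ℤ) (r + 1 + 1) = ((k : ℤ) + 1) * Wr + (-1) ^ (r + 1) :=
      W_succ (k : ℤ) (by linarith) (r + 1)
    by_cases hck : c ≤ (k : ℤ)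
    · obtain ⟨x, hlen, hdig, heven, hval⟩ := ih m hm0 (by linarith)
      have hcast : ((c.toNat : ℤ)) = c := Int.toNat_of_nonneg hc0
      refine ⟨x ++ [c.toNat], by simp [hlen], ?_, ?_, ?_⟩
      · intro d hd
        rcases List.mem_append.mp hd with h | h
        · exact hdig d h
        · have : d = c.toNat := by simpa using h
          subst this
          omega
      · rw [List.takeWhile_append]
        split_ifs with h
        · -- x consists entirely of k's
          have hxk : ∀ d ∈ x, d = k := by
            have hpref := List.takeWhile_prefix (l := x) (fun d => decide (d = k))
            have hxeq : x.takeWhile (fun d => decide (d = k)) = x :=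
              List.IsPrefix.eq_of_length hpref h
            intro d hd
            have := List.takeWhile_eq_self_iff.mp hxeq d hd
            exact of_decide_eq_true this
          have hxrep : x = List.replicate r k :=
            List.eq_replicate_iff.mpr ⟨hlen, hxk⟩
          have hreven : Even r := by
            rw [h, hlen] at heven; exact heven
          have hm : m = Wr - 1 := by
            rw [← hval, hxrep, valW_replicate k hk r, if_pos hreven]
            ring
          have hcne : c.toNat ≠ k := by
            intro hEq
            have hc : c = (k : ℤ) := by rw [← hcast, hEq]
            have hp : (-1 : ℤ) ^ (r + 1) = -1 := (Even.add_one hreven).neg_one_pow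
            rw [hp] at hWsucc
            have hn2 : n = ((k : ℤ) + 1) * Wr - 1 := by
              rw [← hdm, hc, hm]; ring
            linarith
          have htw : List.takeWhile (fun d => decide (d = k)) [c.toNat] = [] := by
            simp [List.takeWhile_cons, hcne]
          rw [htw]
          simpa [hlen] using hreven
        · exact heven
      · rw [valW_append, hlen, hcast, hval]
        linarith
    · -- c ≥ k + 1 : forced n = (k+1) * Wr, use all-k word
      push_neg at hck
      have hck' : (k : ℤ) + 1 ≤ c := by omega
      have hge : ((k : ℤ) + 1) * Wr ≤ n := by
        have h2 : Wr * ((k : ℤ) + 1) ≤ Wr * c :=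
          mul_le_mul_of_nonneg_left hck' (le_of_lt hWpos)
        nlinarith
      rcases Nat.even_or_odd (r + 1) with he | ho
      · have hp : (-1 : ℤ) ^ (r + 1) = 1 := he.neg_one_pow
        rw [hp] at hWsucc
        have hn : n = ((k : ℤ) + 1) * Wr := by linarith
        refine ⟨List.replicate (r + 1) k, by simp, ?_, ?_, ?_⟩
        · intro d hd
          have := List.eq_of_mem_replicate hd
          omega
        · rw [List.takeWhile_replicate]
          simpa using he
        · rw [valW_replicate k hk (r + 1), if_pos he, hn]
          linarith
      · exfalso
        have hp : (-1 : ℤ) ^ (r + 1) = -1 := ho.neg_one_pow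
        rw [hp] at hWsucc
        linarith

lemma strip (k : ℕ) (hk : 1 ≤ k) : ∀ (x : List ℕ), (∀ d ∈ x, d ≤ k) →
    Even ((x.takeWhile fun d => d = k).length) → valW k x ≠ 0 →
    ∃ y : List ℕ, ValidW k y ∧ valW k y = valW k x := by
  intro x
  induction x using List.reverseRecOn with
  | nil => intro _ _ h; exact absurd (valW_nil k) h
  | append_singleton a c ih =>
    intro hd he hne
    by_cases hc : c = 0
    · subst hc
      have hval : valW k (a ++ [0]) = valW k a := by
        rw [valW_append]; simp
      have hzk : (0 : ℕ) ≠ k := by omega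
      have hrun : ((a ++ [0]).takeWhile fun d => d = k).length
          = (a.takeWhile fun d => d = k).length := by
        rw [List.takeWhile_append]
        split_ifs with h
        · have htw : List.takeWhile (fun d => decide (d = k)) [0] = [] := by
            simp [List.takeWhile_cons, hzk]
          rw [htw, List.append_nil, h]
        · rfl
      rw [hval] at hne ⊢
      rw [hrun] at he
      exact ih (fun d hd' => hd d (List.mem_append_left _ hd')) he hne
    · refine ⟨a ++ [c], ⟨by simp, hd, ?_, he⟩, rfl⟩
      rw [List.getLastD_concat]
      exact hc

theorem stmt_11 (k : ℕ) (hk : 1 ≤ k) (n : ℕ) (hn : 0 < n) :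
    ∃ x : List ℕ, ValidW k x ∧ (n : ℤ) = valW k x := by
  have hk' : (1 : ℤ) ≤ (k : ℤ) := by exact_mod_cast hk
  have hb : (n : ℤ) ≤ W (k : ℤ) (2 * n + 1) - 1 := by
    linarith [W_growth (k : ℤ) hk' n]
  obtain ⟨x, hlen, hdig, heven, hval⟩ :=
    key k hk (2 * n) (n : ℤ) (by exact_mod_cast Nat.zero_le n) hb
  have hne : valW k x ≠ 0 := by
    rw [hval]
    exact_mod_cast (by omega : n ≠ 0)
  obtain ⟨y, hy, hyval⟩ := strip k hk x hdig heven hne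
  exact ⟨y, hy, by rw [hyval, hval]⟩
end

section
/- For every integer k ≥ 1 and every r ≥ 1, the number of words x_r x_{r-1} ⋯ x_1 of length r over the alphabet {0,1,...,k} with x_r ≠ 0 that end with an even number (possibly zero) of letters equal to k is exactly W_k(r+1) - W_k(r), where W_k(n) = ((k+1)^n - (-1)^n)/(k+2). -/
namespace Stmt13

abbrev run (k : ℕ) (l : List ℕ) : ℕ := (l.takeWhile fun d => d = k).length

abbrev L (k s : ℕ) (x : Fin (s + 1) → Fin (k + 1)) : Prop :=
  (x ⟨s, Nat.lt_succ_self s⟩ : ℕ) ≠ 0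

abbrev E (k s : ℕ) (x : Fin (s + 1) → Fin (k + 1)) : Prop :=
  Even (run k (List.ofFn fun i => (x i : ℕ)))

def T (k s : ℕ) : ℕ := Fintype.card {x : Fin (s + 1) → Fin (k + 1) // L k s x}
def Ae (k s : ℕ) : ℕ := Fintype.card {x : Fin (s + 1) → Fin (k + 1) // L k s x ∧ E k s x}
def Ao (k s : ℕ) : ℕ := Fintype.card {x : Fin (s + 1) → Fin (k + 1) // L k s x ∧ ¬ E k s x}

lemma run_ofFn_succ (k s : ℕ) (x : Fin (s + 2) → Fin (k + 1)) :
    run k (List.ofFn fun i => (x i : ℕ)) =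
      if (x 0 : ℕ) = k then run k (List.ofFn fun i : Fin (s + 1) => (x i.succ : ℕ)) + 1 else 0 := by
  rw [List.ofFn_succ]
  by_cases h : (x 0 : ℕ) = k <;> simp [run, List.takeWhile_cons, h]

lemma E_of_ne (k s : ℕ) (x : Fin (s + 2) → Fin (k + 1)) (h : (x 0 : ℕ) ≠ k) :
    E k (s + 1) x := by
  show Even _
  rw [run_ofFn_succ, if_neg h]
  exact Even.zero

lemma E_iff_of_eq (k s : ℕ) (x : Fin (s + 2) → Fin (k + 1)) (h : (x 0 : ℕ) = k) :
    E k (s + 1) x ↔ ¬ E k s (fun i => x i.succ) := by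
  show Even _ ↔ ¬ Even _
  rw [run_ofFn_succ, if_pos h, Nat.even_add_one]

lemma notE_succ (k s : ℕ) (x : Fin (s + 2) → Fin (k + 1)) (hE : ¬ E k (s + 1) x) :
    (x 0 : ℕ) = k ∧ E k s (fun i => x i.succ) := by
  rcases eq_or_ne ((x 0 : ℕ)) k with h | h
  · refine ⟨h, ?_⟩
    by_contra hE'
    exact hE ((E_iff_of_eq k s x h).mpr hE')
  · exact absurd (E_of_ne k s x h) hE

/-- helper: single-letter words -/
def e0 {β : Type*} (p : (Fin 1 → β) → Prop) : {x : Fin 1 → β // p x} ≃ {a : β // p fun _ => a} :=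
  (Equiv.funUnique (Fin 1) β).subtypeEquiv fun x => by
    have : (fun _ : Fin 1 => x default) = x := funext fun i => by rw [Unique.eq_default i]
    rw [show ((Equiv.funUnique (Fin 1) β) x) = x default from rfl, this]

lemma T_zero (k : ℕ) : T k 0 = k := by
  classical
  have e := e0 (fun x : Fin 1 → Fin (k + 1) => L k 0 x)
  rw [T, Fintype.card_congr e]
  have e2 : {a : Fin (k + 1) // L k 0 fun _ => a} ≃ {a : Fin (k + 1) // ¬ (a = 0)} := by
    refine Equiv.subtypeEquivRight fun a => ?_
    show (a : ℕ) ≠ 0 ↔ ¬ a = 0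
    rw [Ne, Fin.val_eq_zero_iff]
  rw [Fintype.card_congr e2, Fintype.card_subtype_compl, Fintype.card_subtype_eq, Fintype.card_fin]
  omega

lemma Ao_zero (k : ℕ) (hk : 1 ≤ k) : Ao k 0 = 1 := by
  classical
  have e := e0 (fun x : Fin 1 → Fin (k + 1) => L k 0 x ∧ ¬ E k 0 x)
  rw [Ao, Fintype.card_congr e]
  have e2 : {a : Fin (k + 1) // L k 0 (fun _ => a) ∧ ¬ E k 0 fun _ => a} ≃
      {a : Fin (k + 1) // a = Fin.last k} := by
    refine Equiv.subtypeEquivRight fun a => ?_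
    constructor
    · rintro ⟨-, hE⟩
      by_contra hne
      apply hE
      have hv : (a : ℕ) ≠ k := fun hv => hne (Fin.ext (by simpa using hv))
      show Even (run k [(a : ℕ)])
      simp [run, List.takeWhile_cons, hv]
    · rintro rfl
      refine ⟨by simp [L, Fin.val_last]; omega, ?_⟩
      show ¬ Even (run k [((Fin.last k) : ℕ)])
      simp [run, List.takeWhile_cons, Fin.val_last]
  rw [Fintype.card_congr e2, Fintype.card_subtype_eq]

lemma part (k s : ℕ) : Ae k s + Ao k s = T k s := by
  classical
  rw [Ae, Ao, T, Fintype.card_subtype, Fintype.card_subtype, Fintype.card_subtype,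
    ← Finset.filter_filter, ← Finset.filter_filter]
  exact Finset.card_filter_add_card_filter_not _

lemma cons_last_val (k s : ℕ) (a : Fin (k + 1)) (y : Fin (s + 1) → Fin (k + 1)) :
    (Fin.cons a y : Fin (s + 2) → Fin (k + 1)) ⟨s + 1, Nat.lt_succ_self _⟩ =
      y ⟨s, Nat.lt_succ_self _⟩ :=
  Fin.cons_succ (α := fun _ : Fin (s + 2) => Fin (k + 1)) a y ⟨s, Nat.lt_succ_self s⟩

lemma L_cons (k s : ℕ) (a : Fin (k + 1)) (y : Fin (s + 1) → Fin (k + 1)) (h : L k s y) :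
    L k (s + 1) (Fin.cons a y) := by
  unfold L
  rw [cons_last_val]
  exact h

def eT (k s : ℕ) :
    {x : Fin (s + 2) → Fin (k + 1) // L k (s + 1) x} ≃
      Fin (k + 1) × {y : Fin (s + 1) → Fin (k + 1) // L k s y} where
  toFun x := (x.1 0, ⟨fun i => x.1 i.succ, x.2⟩)
  invFun ay := ⟨Fin.cons ay.1 ay.2.1, L_cons k s ay.1 ay.2.1 ay.2.2⟩
  left_inv x := Subtype.ext (Fin.cons_self_tail x.1)
  right_inv ay := by
    obtain ⟨a, y⟩ := ay
    refine Prod.ext ?_ (Subtype.ext ?_)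
    · exact Fin.cons_zero (α := fun _ : Fin (s + 2) => Fin (k + 1)) a y.1
    · exact funext fun i => Fin.cons_succ (α := fun _ : Fin (s + 2) => Fin (k + 1)) a y.1 i

lemma T_succ (k s : ℕ) : T k (s + 1) = (k + 1) * T k s := by
  rw [T, Fintype.card_congr (eT k s), Fintype.card_prod, Fintype.card_fin]
  rfl

lemma T_formula (k s : ℕ) : T k s = k * (k + 1) ^ s := by
  induction s with
  | zero => simpa using T_zero k
  | succ s ih => rw [T_succ, ih]; ring

def eOdd (k s : ℕ) :
    {x : Fin (s + 2) → Fin (k + 1) // L k (s + 1) x ∧ ¬ E k (s + 1) x} ≃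
      {y : Fin (s + 1) → Fin (k + 1) // L k s y ∧ E k s y} where
  toFun x := ⟨fun i => x.1 i.succ, x.2.1, (notE_succ k s x.1 x.2.2).2⟩
  invFun y := ⟨Fin.cons (Fin.last k) y.1, by
    constructor
    · exact L_cons k s (Fin.last k) y.1 y.2.1
    · have h0 : ((Fin.cons (Fin.last k) y.1 : Fin (s+2) → Fin (k+1)) 0 : ℕ) = k := by
        rw [Fin.cons_zero, Fin.val_last]
      rw [E_iff_of_eq k s _ h0]
      intro h
      apply h
      have : (fun i : Fin (s + 1) => (Fin.cons (Fin.last k) y.1 : Fin (s + 2) → Fin (k + 1)) i.succ) = y.1 :=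
        funext fun i => Fin.cons_succ (α := fun _ : Fin (s + 2) => Fin (k + 1)) _ _ i
      rw [this]
      exact y.2.2⟩
  left_inv x := by
    refine Subtype.ext ?_
    change Fin.cons (Fin.last k) (Fin.tail x.1) = x.1
    have h0 : x.1 0 = Fin.last k := Fin.ext (by
      rw [Fin.val_last]; exact (notE_succ k s x.1 x.2.2).1)
    rw [← h0, Fin.cons_self_tail]
  right_inv y := Subtype.ext (funext fun i => Fin.cons_succ (α := fun _ : Fin (s + 2) => Fin (k + 1)) (Fin.last k) y.1 i)

lemma Ao_succ (k s : ℕ) : Ao k (s + 1) = Ae k s := by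
  rw [Ao, Ae, Fintype.card_congr (eOdd k s)]

lemma Ae_formula (k : ℕ) (hk : 1 ≤ k) (s : ℕ) :
    ((k : ℤ) + 2) * (Ae k s : ℤ) = k * (k + 1) ^ (s + 1) + 2 * (-1) ^ (s + 1) := by
  induction s with
  | zero =>
      have h1 : Ae k 0 + Ao k 0 = T k 0 := part k 0
      rw [Ao_zero k hk, T_zero k] at h1
      have h2 : (Ae k 0 : ℤ) = (k : ℤ) - 1 := by omega
      rw [h2]; ring
  | succ s ih =>
      have h1 : Ae k (s + 1) + Ao k (s + 1) = T k (s + 1) := part k (s + 1)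
      rw [Ao_succ, T_formula] at h1
      have h2 : (Ae k (s + 1) : ℤ) + (Ae k s : ℤ) = (k : ℤ) * (k + 1) ^ (s + 1) := by
        exact_mod_cast congrArg (Nat.cast : ℕ → ℤ) h1
      linear_combination ((k : ℤ) + 2) * h2 - ih

lemma Wdvd (k : ℤ) (n : ℕ) : (k + 2) ∣ ((k + 1) ^ n - (-1) ^ n) := by
  have h : (k + 1) ≡ (-1) [ZMOD (k + 2)] := by
    have : (k + 2) ∣ (-1 - (k + 1)) := ⟨-1, by ring⟩
    exact (Int.modEq_iff_dvd).mpr this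
  have h2 := (h.pow n).dvd
  exact (dvd_sub_comm).mp h2

lemma W_mul (k : ℤ) (n : ℕ) : W k n * (k + 2) = (k + 1) ^ n - (-1) ^ n :=
  Int.ediv_mul_cancel (Wdvd k n)

end Stmt13

theorem stmt_13 (k r : ℕ) (hk : 1 ≤ k) (hr : 1 ≤ r) :
    (Fintype.card
      {x : Fin r → Fin (k + 1) //
        (x ⟨r - 1, by omega⟩ : ℕ) ≠ 0 ∧
          Even (((List.ofFn fun i => (x i : ℕ)).takeWhile fun d => d = k).length)} : ℤ) =
      W k (r + 1) - W k r := by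
  obtain ⟨s, rfl⟩ : ∃ s, r = s + 1 := ⟨r - 1, by omega⟩
  have hcard :
      Fintype.card
        {x : Fin (s + 1) → Fin (k + 1) //
          (x ⟨s + 1 - 1, by omega⟩ : ℕ) ≠ 0 ∧
            Even (((List.ofFn fun i => (x i : ℕ)).takeWhile fun d => d = k).length)} =
        Stmt13.Ae k s := Fintype.card_congr (Equiv.refl _)
  rw [hcard]
  have hne : ((k : ℤ) + 2) ≠ 0 := by positivity
  apply mul_right_cancel₀ hne
  have h1 := Stmt13.Ae_formula k hk s
  have h2 := Stmt13.W_mul (k : ℤ) (s + 2)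
  have h3 := Stmt13.W_mul (k : ℤ) (s + 1)
  have : (W (k : ℤ) (s + 1 + 1) - W (k : ℤ) (s + 1)) * ((k : ℤ) + 2) =
      (k : ℤ) * (k + 1) ^ (s + 1) + 2 * (-1) ^ (s + 1) := by
    rw [sub_mul]
    rw [show s + 1 + 1 = s + 2 from rfl, h2, h3]
    ring
  rw [this]
  linarith [h1]
end

section
/- Let k ≥ 1 and τ_k: 1 → 1^{k-1}2, 2 → 1^{k-1}2·1^{k+1}, and σ_k: 1 → 1(1^{k-1}2)^k 1^k, 2 → 1(1^{k-1}2)^{2k+1} 1^k. Then for every word z over {1,2}: σ_k(1·z) = 1 · τ_k^2(z) · (1^{k-1}2)^k · 1^k. -/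
/-- The morphism `σ_k : 1 ↦ 1(1^{k-1}2)^k 1^k, 2 ↦ 1(1^{k-1}2)^{2k+1} 1^k`. -/
def sigk (k : ℕ) : List ℕ → List ℕ := fun w =>
  w.flatMap fun c =>
    if c = 1 then
      [1] ++ (List.replicate k (List.replicate (k - 1) 1 ++ [2])).flatten ++ List.replicate k 1
    else
      [1] ++ (List.replicate (2 * k + 1) (List.replicate (k - 1) 1 ++ [2])).flatten ++
        List.replicate k 1

namespace Stmt16Aux

/-- `B k = 1^{k-1}2`. -/
def B (k : ℕ) : List ℕ := List.replicate (k - 1) 1 ++ [2]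

/-- `Bk k n = (1^{k-1}2)^n`. -/
def Bk (k n : ℕ) : List ℕ := (List.replicate n (B k)).flatten

lemma tauk_append (k : ℕ) (u v : List ℕ) : tauk k (u ++ v) = tauk k u ++ tauk k v :=
  List.flatMap_append ..

lemma sigk_append (k : ℕ) (u v : List ℕ) : sigk k (u ++ v) = sigk k u ++ sigk k v :=
  List.flatMap_append ..

lemma tauk_one (k : ℕ) : tauk k [1] = B k := by simp [tauk, B]

lemma tauk_two (k : ℕ) : tauk k [2] = B k ++ List.replicate (k + 1) 1 := by
  simp [tauk, B]

lemma sigk_one (k : ℕ) : sigk k [1] = [1] ++ Bk k k ++ List.replicate k 1 := by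
  simp [sigk, Bk, B]

lemma sigk_two (k : ℕ) : sigk k [2] = [1] ++ Bk k (2 * k + 1) ++ List.replicate k 1 := by
  simp [sigk, Bk, B]

lemma Bk_add (k m n : ℕ) : Bk k (m + n) = Bk k m ++ Bk k n := by
  rw [Bk, Bk, Bk, List.replicate_add, List.flatten_append]

lemma tauk_rep_one (k n : ℕ) : tauk k (List.replicate n 1) = Bk k n := by
  induction n with
  | zero => simp [tauk, Bk]
  | succ n ih =>
    rw [List.replicate_succ, show (1 : ℕ) :: List.replicate n 1 = [1] ++ List.replicate n 1
      from rfl, tauk_append, ih, tauk_one]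
    rw [show n + 1 = 1 + n by omega, Bk_add]
    simp [Bk]

lemma tauk_B (k : ℕ) (hk : 1 ≤ k) :
    tauk k (B k) = Bk k k ++ List.replicate (k + 1) 1 := by
  obtain ⟨m, rfl⟩ : ∃ m, k = m + 1 := ⟨k - 1, by omega⟩
  rw [B, tauk_append, tauk_rep_one, tauk_two]
  simp only [Nat.add_sub_cancel, Bk, List.replicate_succ', List.flatten_append,
    List.flatten_cons, List.flatten_nil, List.append_nil, List.append_assoc]

lemma key (k : ℕ) (hk : 1 ≤ k) (c : ℕ) (hc : c = 1 ∨ c = 2) :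
    Bk k k ++ List.replicate k 1 ++ sigk k [c]
      = tauk k (tauk k [c]) ++ (Bk k k ++ List.replicate k 1) := by
  have hrep : List.replicate k 1 ++ [1] = List.replicate (k + 1) (1 : ℕ) := by
    simp [List.replicate_add]
  rcases hc with rfl | rfl
  · rw [sigk_one, tauk_one, tauk_B k hk]
    simp [List.replicate_succ', List.append_assoc]
  · rw [sigk_two, tauk_two, tauk_append, tauk_B k hk, tauk_rep_one,
      show 2 * k + 1 = (k + 1) + k by omega, Bk_add]
    simp [List.replicate_succ', List.append_assoc]

lemma main (k : ℕ) (hk : 1 ≤ k) (z : List ℕ) (hz : ∀ c ∈ z, c = 1 ∨ c = 2) :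
    Bk k k ++ List.replicate k 1 ++ sigk k z
      = tauk k (tauk k z) ++ (Bk k k ++ List.replicate k 1) := by
  induction z with
  | nil => simp [sigk, tauk]
  | cons c z ih =>
    have hc := hz c (by simp)
    have hz' : ∀ d ∈ z, d = 1 ∨ d = 2 := fun d hd => hz d (by simp [hd])
    rw [show c :: z = [c] ++ z from rfl, sigk_append, tauk_append, tauk_append,
      ← List.append_assoc, key k hk c hc, List.append_assoc, ih hz',
      ← List.append_assoc]

end Stmt16Aux

theorem stmt_16 (k : ℕ) (hk : 1 ≤ k) (z : List ℕ) (hz : ∀ c ∈ z, c = 1 ∨ c = 2) :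
    sigk k ([1] ++ z) =
      [1] ++ tauk k (tauk k z) ++
        (List.replicate k (List.replicate (k - 1) 1 ++ [2])).flatten ++
        List.replicate k 1 := by
  have h := Stmt16Aux.main k hk z hz
  rw [Stmt16Aux.sigk_append, Stmt16Aux.sigk_one]
  simp only [Stmt16Aux.Bk, Stmt16Aux.B] at h ⊢
  simp only [List.append_assoc] at h ⊢
  rw [h]
end

section
/- Let t = (t_n)_{n≥0} be a binary sequence with t_0 = t_1 = 1 such that the factor '00' does not occur in t, and let S be the sum-free set generated by t via Cameron's bijection θ, with associated ternary sequence v = (v_n)_{n≥1} where v_n = 1 if n ∈ S, v_n = * if n ∈ S+S, v_n = 0 otherwise. Then for all n ≥ 1, v_n = * if and only if n is even. In particular, every element of S is odd. -/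
/-- Cameron's greedy construction: `decisions t n` is the list of membership decisions
(in the sum-free set `θ(t)`) for the positions `1, 2, …, n`.  Position `m` is skipped
(decision `false`) if it is a sum of two earlier members; otherwise it consumes the
next unread bit of `t` (`t 0` being the first bit). -/
def decisions (t : ℕ → Bool) : ℕ → List Bool
  | 0 => []
  | n + 1 =>
    let L := decisions t n
    -- membership of the position `m ≥ 1` among the already decided positions
    let isMem : ℕ → Bool := fun m => L.getD (m - 1) false
    -- `m` is a sum of two (not necessarily distinct) earlier members
    let isStar : ℕ → Bool := fun m =>
      (List.range n).any fun a => decide (a + 1 < m) && isMem (a + 1) && isMem (m - (a + 1))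
    -- number of bits of `t` consumed by the positions `1, …, n`
    let idx := ((List.range n).filter fun m => isStar (m + 1) = false).length
    L ++ [if isStar (n + 1) = true then false else t idx]

/-- Membership of the positive integer `n` in the sum-free set `θ(t)`. -/
def memS (t : ℕ → Bool) (n : ℕ) : Prop := (decisions t n).getD (n - 1) false = true

/-- The predicted decision pattern: positions `i+1` with `i` even are members iff `t (i/2)`. -/
def pat (t : ℕ → Bool) (i : ℕ) : Bool := if i % 2 = 0 then t (i / 2) else false

lemma getD_map_range (f : ℕ → Bool) (n i : ℕ) :
    ((List.range n).map f).getD i false = if i < n then f i else false := by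
  by_cases h : i < n
  · simp [List.getD_eq_getElem?_getD, List.getElem?_map, List.getElem?_range h, h]
  · rw [List.getD_eq_getElem?_getD, List.getElem?_eq_none (by simpa using h)]
    simp [h]

section
variable (t : ℕ → Bool) (h0 : t 0 = true) (h1 : t 1 = true)
  (h00 : ∀ n, t n = true ∨ t (n + 1) = true)

include h0 h1 h00 in
lemma wit (k : ℕ) : ∃ j, j ≤ k ∧ t j = true ∧ t (k - j) = true := by
  by_cases h : t k = true
  · exact ⟨k, le_refl _, h, by simpa using h0⟩
  · obtain ⟨k', rfl⟩ : ∃ k', k = k' + 1 := by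
      rcases k with _ | k'
      · exact absurd h0 h
      · exact ⟨k', rfl⟩
    have hk' : t k' = true := (h00 k').resolve_right h
    exact ⟨k', Nat.le_succ _, hk', by simpa using h1⟩

include h0 h1 h00 in
lemma star_eq (n m : ℕ) (hm : m ≤ n) :
    ((List.range n).any fun a => decide (a + 1 < m + 1) &&
        ((List.range n).map (pat t)).getD (a + 1 - 1) false &&
        ((List.range n).map (pat t)).getD (m + 1 - (a + 1) - 1) false)
      = decide (m % 2 = 1) := by
  rcases Nat.mod_two_eq_zero_or_one m with hpar | hpar
  · rw [hpar]
    show _ = false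
    rw [List.any_eq_false]
    intro a ha
    simp only [List.mem_range] at ha
    simp only [Nat.add_sub_cancel, getD_map_range, Bool.and_eq_true, decide_eq_true_eq]
    rintro ⟨⟨ham, hA⟩, hB⟩
    have ha' : a < m := by omega
    rw [if_pos ha] at hA
    rw [if_pos (by omega : m + 1 - (a + 1) - 1 < n)] at hB
    simp only [pat] at hA hB
    split at hA
    · split at hB
      · omega
      · exact absurd hB (by simp)
    · exact absurd hA (by simp)
  · rw [hpar]
    show _ = true
    rw [List.any_eq_true]
    obtain ⟨k, rfl⟩ : ∃ k, m = 2 * k + 1 := ⟨m / 2, by omega⟩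
    obtain ⟨j, hj, htj, htj'⟩ := wit t h0 h1 h00 k
    refine ⟨2 * j, List.mem_range.mpr (by omega), ?_⟩
    simp only [Nat.add_sub_cancel, getD_map_range, Bool.and_eq_true, decide_eq_true_eq]
    refine ⟨⟨by omega, ?_⟩, ?_⟩
    · rw [if_pos (by omega)]
      simp [pat, Nat.mul_mod_right, Nat.mul_div_cancel_left, htj]
    · rw [if_pos (by omega)]
      have : 2 * k + 1 + 1 - (2 * j + 1) - 1 = 2 * (k - j) := by omega
      rw [this]
      simp [pat, Nat.mul_mod_right, Nat.mul_div_cancel_left, htj']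

lemma count_even (n : ℕ) :
    ((List.range n).filter (fun m => decide (m % 2 = 0))).length = (n + 1) / 2 := by
  induction n with
  | zero => simp
  | succ n ih =>
    rw [List.range_succ, List.filter_append, List.length_append, ih]
    by_cases h : n % 2 = 0 <;> simp [h] <;> omega

include h0 h1 h00 in
lemma decisions_eq (n : ℕ) : decisions t n = (List.range n).map (pat t) := by
  induction n with
  | zero => simp [decisions]
  | succ n ih =>
    rw [show decisions t (n + 1) =
        (decisions t n) ++ [if ((List.range n).any fun a => decide (a + 1 < n + 1) &&
            (decisions t n).getD (a + 1 - 1) false &&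
            (decisions t n).getD (n + 1 - (a + 1) - 1) false) = true then false
          else t (((List.range n).filter fun m =>
            ((List.range n).any fun a => decide (a + 1 < m + 1) &&
              (decisions t n).getD (a + 1 - 1) false &&
              (decisions t n).getD (m + 1 - (a + 1) - 1) false) = false).length)] from rfl]
    rw [ih, star_eq t h0 h1 h00 n n (le_refl n)]
    have hfilter : ((List.range n).filter fun m =>
        ((List.range n).any fun a => decide (a + 1 < m + 1) &&
          ((List.range n).map (pat t)).getD (a + 1 - 1) false &&
          ((List.range n).map (pat t)).getD (m + 1 - (a + 1) - 1) false) = false)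
        = (List.range n).filter (fun m => decide (m % 2 = 0)) := by
      apply List.filter_congr
      intro m hm
      rw [star_eq t h0 h1 h00 n m (le_of_lt (List.mem_range.mp hm))]
      rcases Nat.mod_two_eq_zero_or_one m with h | h <;> simp [h]
    rw [hfilter, count_even]
    rw [List.range_succ, List.map_append, List.map_singleton]
    congr 1
    rcases Nat.mod_two_eq_zero_or_one n with h | h
    · rw [if_neg (by simp [h])]
      have h2 : (n + 1) / 2 = n / 2 := by omega
      rw [h2]
      simp [pat, h]
    · rw [if_pos (by simp [h])]
      simp [pat, h]

include h0 h1 h00 in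
lemma memS_iff (n : ℕ) :
    memS t n ↔ 1 ≤ n ∧ (n - 1) % 2 = 0 ∧ t ((n - 1) / 2) = true := by
  unfold memS
  rw [decisions_eq t h0 h1 h00, getD_map_range]
  rcases n with _ | n
  · simp
  · rw [if_pos (by omega)]
    simp only [Nat.add_sub_cancel, pat]
    split <;> simp_all

end

theorem stmt_17 (t : ℕ → Bool) (h0 : t 0 = true) (h1 : t 1 = true)
    (h00 : ∀ n, t n = true ∨ t (n + 1) = true) :
    (∀ n, 1 ≤ n → ((∃ a b, memS t a ∧ memS t b ∧ a + b = n) ↔ Even n)) ∧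
      ∀ n, memS t n → Odd n := by
  have hodd : ∀ n, memS t n → Odd n := by
    intro n hn
    rw [memS_iff t h0 h1 h00] at hn
    obtain ⟨h1n, h2n, _⟩ := hn
    exact Nat.odd_iff.mpr (by omega)
  refine ⟨fun n hn => ⟨?_, ?_⟩, hodd⟩
  · rintro ⟨a, b, ha, hb, rfl⟩
    have := hodd a ha
    have := hodd b hb
    exact Odd.add_odd (hodd a ha) (hodd b hb)
  · intro hev
    obtain ⟨k, hk⟩ := hev
    have hk1 : 1 ≤ k := by omega
    obtain ⟨j, hj, htj, htj'⟩ := wit t h0 h1 h00 (k - 1)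
    refine ⟨2 * j + 1, 2 * (k - 1 - j) + 1, ?_, ?_, by omega⟩
    · rw [memS_iff t h0 h1 h00]
      refine ⟨by omega, by omega, ?_⟩
      simpa [Nat.mul_div_cancel_left, show 2 * j + 1 - 1 = 2 * j by omega] using htj
    · rw [memS_iff t h0 h1 h00]
      refine ⟨by omega, by omega, ?_⟩
      simpa [Nat.mul_div_cancel_left,
        show 2 * (k - 1 - j) + 1 - 1 = 2 * (k - 1 - j) by omega] using htj'
end

section
/- Let t be a Sturmian sequence over {0,1} (subword complexity n+1 for all n ≥ 1) with t_0 = t_1 = 1, and let S = (s_n)_{n≥1} be the sum-free set generated by t via Cameron's bijection, listed in increasing order. Then the difference sequence (s_{n+1} - s_n)_{n≥1} takes values in {2,4} and is the image under the coding 0 → 2, 1 → 4 of a Sturmian sequence; in particular (s_{n+1}-s_n)_{n≥1} is itself Sturmian. -/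
/-- The set of factors of length `n` of the infinite word `t`. -/
def factorSet {α : Type*} (t : ℕ → α) (n : ℕ) : Set (List α) :=
  {w | ∃ i, w = (List.range n).map fun j => t (i + j)}

/-- `t` is Sturmian: it has exactly `n + 1` factors of each length `n ≥ 1`. -/
def IsSturmian {α : Type*} (t : ℕ → α) : Prop :=
  ∀ n, 1 ≤ n → (factorSet t n).ncard = n + 1

namespace SAux
variable {α : Type*}

def win (w : ℕ → α) (i n : ℕ) : List α := (List.range n).map fun j => w (i+j)

@[simp] lemma length_win (w : ℕ → α) (i n : ℕ) : (win w i n).length = n := by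
  simp [win]

lemma mem_factorSet {x : List α} {w : ℕ → α} {n : ℕ} :
    x ∈ factorSet w n ↔ ∃ i, x = win w i n := Iff.rfl

lemma win_mem (w : ℕ → α) (i n : ℕ) : win w i n ∈ factorSet w n := ⟨i, rfl⟩

lemma win_add (w : ℕ → α) (i p q : ℕ) :
    win w i (p+q) = win w i p ++ win w (i+p) q := by
  simp only [win, List.range_add, List.map_append, List.map_map, Function.comp_def]
  congr 1
  apply List.map_congr_left
  intro a _; ring_nf

lemma win_succ (w : ℕ → α) (i n : ℕ) : win w i (n+1) = win w i n ++ [w (i+n)] := by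
  rw [win_add]; simp [win]

lemma take_win (w : ℕ → α) (i : ℕ) {k n : ℕ} (h : k ≤ n) :
    (win w i n).take k = win w i k := by
  obtain ⟨q, rfl⟩ := Nat.exists_eq_add_of_le h
  rw [win_add, List.take_append_of_le_length (by simp), List.take_of_length_le (by simp)]

lemma drop_win (w : ℕ → α) (i k n : ℕ) (h : k ≤ n) :
    (win w i n).drop k = win w (i+k) (n-k) := by
  obtain ⟨q, rfl⟩ := Nat.exists_eq_add_of_le h
  rw [win_add, List.drop_append_of_le_length (by simp)]
  simp

lemma factorSet_finite [Finite α] (w : ℕ → α) (n : ℕ) : (factorSet w n).Finite := by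
  apply (List.finite_length_eq α n).subset
  rintro x ⟨i, rfl⟩; simp

lemma length_of_mem_factorSet {x : List α} {w : ℕ → α} {n : ℕ} (h : x ∈ factorSet w n) :
    x.length = n := by obtain ⟨i, rfl⟩ := h; simp [win]

lemma drop_mem_factorSet {x : List α} {w : ℕ → α} {n : ℕ} (h : x ∈ factorSet w n) (k : ℕ) :
    x.drop k ∈ factorSet w (n - k) := by
  obtain ⟨i, rfl⟩ := mem_factorSet.1 h
  rcases le_or_gt k n with hk | hk
  · rw [drop_win _ _ _ _ hk]; exact win_mem _ _ _
  · rw [List.drop_of_length_le (by simp [hk.le]), Nat.sub_eq_zero_of_le hk.le]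
    exact ⟨0, by simp [win]⟩

lemma take_image (w : ℕ → α) (n : ℕ) :
    (List.take n) '' factorSet w (n+1) = factorSet w n := by
  ext x; constructor
  · rintro ⟨y, ⟨i, rfl⟩, rfl⟩
    rw [show ((List.range (n+1)).map fun j => w (i+j)) = win w i (n+1) from rfl,
      take_win _ _ (by omega)]
    exact win_mem _ _ _
  · rintro ⟨i, rfl⟩
    exact ⟨win w i (n+1), win_mem _ _ _, take_win _ _ (by omega)⟩

lemma p_mono [Finite α] (w : ℕ → α) (n : ℕ) :
    (factorSet w n).ncard ≤ (factorSet w (n+1)).ncard := by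
  rw [← take_image w n]
  exact Set.ncard_image_le (factorSet_finite w (n+1))

/-- `v` is a right-special factor of `w`. -/
def RS (w : ℕ → Bool) (v : List Bool) : Prop :=
  v ++ [false] ∈ factorSet w (v.length+1) ∧ v ++ [true] ∈ factorSet w (v.length+1)

lemma RS.mem {w : ℕ → Bool} {v : List Bool} (h : RS w v) : v ∈ factorSet w v.length := by
  have := take_image w v.length
  rw [← this]
  exact ⟨v ++ [true], h.2, by simp⟩

lemma RS.drop {w : ℕ → Bool} {v : List Bool} (h : RS w v) (k : ℕ) (hk : k ≤ v.length) :
    RS w (v.drop k) := by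
  constructor <;>
  · rw [show (v.drop k) ++ _ = (v ++ _).drop k by rw [List.drop_append_of_le_length hk]]
    have := drop_mem_factorSet (by simpa using h.1) k
    have h2 := drop_mem_factorSet (show v ++ [true] ∈ factorSet w (v.length+1) from h.2) k
    simp only [List.length_drop]
    first
    | · convert drop_mem_factorSet h.1 k using 2; omega
    | · convert drop_mem_factorSet h.2 k using 2; omega

/-- Any element of `factorSet w (n+1)` splits as prefix ++ last. -/
lemma split_mem {w : ℕ → Bool} {n : ℕ} {x : List Bool} (h : x ∈ factorSet w (n+1)) :
    x.take n ∈ factorSet w n ∧ ∃ a, x = x.take n ++ [a] := by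
  obtain ⟨i, rfl⟩ := mem_factorSet.1 h
  rw [take_win _ _ (by omega)]
  exact ⟨win_mem _ _ _, ⟨w (i+n), by rw [win_succ]⟩⟩

lemma rs_of_two_ext {w : ℕ → Bool} {n : ℕ} {v : List Bool} (hlen : v.length = n)
    {a b : Bool} (hab : a ≠ b)
    (ha : v ++ [a] ∈ factorSet w (n+1)) (hb : v ++ [b] ∈ factorSet w (n+1)) : RS w v := by
  rcases Bool.eq_false_or_eq_true a with h | h <;> subst h <;>
    simp_all [RS, hlen]


lemma split_mem' {w : ℕ → Bool} {n : ℕ} {x : List Bool} (h : x ∈ factorSet w (n+1)) :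
    ∃ a, x.take n ∈ factorSet w n ∧ x = x.take n ++ [a] ∧ x.drop n = [a] := by
  obtain ⟨i, rfl⟩ := mem_factorSet.1 h
  refine ⟨w (i+n), ?_, ?_, ?_⟩
  · rw [take_win _ _ (by omega)]; exact win_mem _ _ _
  · rw [take_win _ _ (by omega)]; exact win_succ w i n
  · have h1 : n+1-n = 1 := by omega
    rw [drop_win _ _ _ _ (by omega), h1, win_succ]
    simp [win]

lemma ncard_succ_le_of_unique_RS {w : ℕ → Bool} {n : ℕ}
    (hu : ∀ v v', RS w v → RS w v' → v.length = n → v'.length = n → v = v') :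
    (factorSet w (n+1)).ncard ≤ (factorSet w n).ncard + 1 := by
  by_cases hex : ∃ v₀, RS w v₀ ∧ v₀.length = n
  · obtain ⟨v₀, hv₀, hlen₀⟩ := hex
    set f : List Bool → List Bool × Bool :=
      fun x => (x.take n, decide (x.take n = v₀) && decide (x.drop n = [true])) with hf
    have hinj : Set.InjOn f (factorSet w (n+1)) := by
      intro x hx y hy hxy
      obtain ⟨a, hxmem, hxa, hdx⟩ := split_mem' hx
      obtain ⟨b, hymem, hyb, hdy⟩ := split_mem' hy
      have htake : x.take n = y.take n := congrArg Prod.fst hxy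
      have hxtake : (x.take n).length = n := by
        have := length_of_mem_factorSet hxmem; omega
      have hab : a = b := by
        by_contra hne
        by_cases hsp : x.take n = v₀
        · have hsp' : y.take n = v₀ := htake ▸ hsp
          have h2 := congrArg Prod.snd hxy
          simp only [hf] at h2
          rw [hsp, hsp', hdx, hdy] at h2
          cases a <;> cases b
          · exact hne rfl
          · simp at h2
          · simp at h2
          · exact hne rfl
        · have hrs : RS w (x.take n) :=
            rs_of_two_ext hxtake hne (hxa ▸ hx) (by rw [htake] at hxa ⊢; exact hyb ▸ hy)
          exact hsp (hu _ _ hrs hv₀ hxtake hlen₀)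
      rw [hxa, hyb, htake, hab]
    have himage : f '' (factorSet w (n+1)) ⊆
        insert (v₀, true) ((fun v => (v, false)) '' factorSet w n) := by
      rintro _ ⟨x, hx, rfl⟩
      obtain ⟨a, hxmem, hxa, hdx⟩ := split_mem' hx
      by_cases hflag : (decide (x.take n = v₀) && decide (x.drop n = [true])) = true
      · left
        rw [Bool.and_eq_true, decide_eq_true_iff, decide_eq_true_iff] at hflag
        simp [hf, hflag.1, hflag.2]
      · right
        refine ⟨x.take n, hxmem, ?_⟩
        simp only [hf]
        rw [Bool.eq_false_iff.2 hflag]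
    calc (factorSet w (n+1)).ncard = (f '' (factorSet w (n+1))).ncard :=
          (Set.ncard_image_of_injOn hinj).symm
      _ ≤ (insert (v₀, true) ((fun v => (v, false)) '' factorSet w n)).ncard :=
          Set.ncard_le_ncard himage
            (Set.Finite.insert _ ((factorSet_finite w n).image _))
      _ ≤ ((fun v => (v, false)) '' factorSet w n).ncard + 1 := Set.ncard_insert_le _ _
      _ = (factorSet w n).ncard + 1 := by
          rw [Set.ncard_image_of_injective _ (fun a b h => congrArg Prod.fst h)]
  · have hinj : Set.InjOn (List.take n) (factorSet w (n+1)) := by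
      intro x hx y hy hxy
      obtain ⟨a, hxmem, hxa, hdx⟩ := split_mem' hx
      obtain ⟨b, hymem, hyb, hdy⟩ := split_mem' hy
      have hxtake : (x.take n).length = n := by
        have := length_of_mem_factorSet hxmem; omega
      have hab : a = b := by
        by_contra hne
        exact hex ⟨_, rs_of_two_ext hxtake hne (hxa ▸ hx)
          (by rw [hxy] at hxa ⊢; exact hyb ▸ hy), hxtake⟩
      rw [hxa, hyb, hxy, hab]
    calc (factorSet w (n+1)).ncard
        = ((List.take n) '' (factorSet w (n+1))).ncard :=
          (Set.ncard_image_of_injOn hinj).symm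
      _ = (factorSet w n).ncard := by rw [take_image]
      _ ≤ (factorSet w n).ncard + 1 := Nat.le_succ _

lemma ncard_succ_eq_of_no_RS {w : ℕ → Bool} {n : ℕ}
    (hex : ¬ ∃ v₀, RS w v₀ ∧ v₀.length = n) :
    (factorSet w (n+1)).ncard = (factorSet w n).ncard := by
  have hinj : Set.InjOn (List.take n) (factorSet w (n+1)) := by
    intro x hx y hy hxy
    obtain ⟨a, hxmem, hxa, hdx⟩ := split_mem' hx
    obtain ⟨b, hymem, hyb, hdy⟩ := split_mem' hy
    have hxtake : (x.take n).length = n := by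
      have := length_of_mem_factorSet hxmem; omega
    have hab : a = b := by
      by_contra hne
      exact hex ⟨_, rs_of_two_ext hxtake hne (hxa ▸ hx)
        (by rw [hxy] at hxa ⊢; exact hyb ▸ hy), hxtake⟩
    rw [hxa, hyb, hxy, hab]
  calc (factorSet w (n+1)).ncard
      = ((List.take n) '' (factorSet w (n+1))).ncard :=
        (Set.ncard_image_of_injOn hinj).symm
    _ = (factorSet w n).ncard := by rw [take_image]

lemma ncard_succ_ge_of_RS {w : ℕ → Bool} {n : ℕ} {v : List Bool}
    (hv : RS w v) (hlen : v.length = n) :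
    (factorSet w n).ncard + 1 ≤ (factorSet w (n+1)).ncard := by
  have hvt : v ++ [true] ∈ factorSet w (n+1) := by rw [← hlen]; exact hv.2
  have hvf : v ++ [false] ∈ factorSet w (n+1) := by rw [← hlen]; exact hv.1
  have hD : (List.take n) '' (factorSet w (n+1) \ {v ++ [true]}) = factorSet w n := by
    apply Set.Subset.antisymm
    · rintro _ ⟨x, ⟨hx, _⟩, rfl⟩
      rw [← take_image w n]; exact ⟨x, hx, rfl⟩
    · intro x hx
      obtain ⟨i, rfl⟩ := mem_factorSet.1 hx
      by_cases he : win w i (n+1) = v ++ [true]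
      · refine ⟨v ++ [false], ⟨hvf, by simp⟩, ?_⟩
        have h1 : (win w i (n+1)).take n = win w i n := take_win _ _ (by omega)
        rw [he] at h1
        rw [List.take_append_of_le_length (by omega), List.take_of_length_le (by omega)]
        rw [List.take_append_of_le_length (by omega), List.take_of_length_le (by omega)]
          at h1
        exact h1
      · exact ⟨win w i (n+1), ⟨win_mem _ _ _, he⟩, take_win _ _ (by omega)⟩
  have hfin := factorSet_finite w (n+1)
  calc (factorSet w n).ncard + 1
      = ((List.take n) '' (factorSet w (n+1) \ {v ++ [true]})).ncard + 1 := by rw [hD]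
    _ ≤ (factorSet w (n+1) \ {v ++ [true]}).ncard + 1 :=
        Nat.add_le_add_right (Set.ncard_image_le (hs := hfin.subset Set.diff_subset)) 1
    _ = (factorSet w (n+1)).ncard := Set.ncard_diff_singleton_add_one hvt hfin

lemma ncard_succ_ge_two_of_two_RS {w : ℕ → Bool} {n : ℕ} {v v' : List Bool}
    (hv : RS w v) (hv' : RS w v') (hne : v ≠ v')
    (hlen : v.length = n) (hlen' : v'.length = n) :
    (factorSet w n).ncard + 2 ≤ (factorSet w (n+1)).ncard := by
  have hvt : v ++ [true] ∈ factorSet w (n+1) := by rw [← hlen]; exact hv.2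
  have hvf : v ++ [false] ∈ factorSet w (n+1) := by rw [← hlen]; exact hv.1
  have hv't : v' ++ [true] ∈ factorSet w (n+1) := by rw [← hlen']; exact hv'.2
  have hv'f : v' ++ [false] ∈ factorSet w (n+1) := by rw [← hlen']; exact hv'.1
  set P : Set (List Bool) := {v ++ [true], v' ++ [true]} with hP
  have hD : (List.take n) '' (factorSet w (n+1) \ P) = factorSet w n := by
    apply Set.Subset.antisymm
    · rintro _ ⟨x, ⟨hx, _⟩, rfl⟩
      rw [← take_image w n]; exact ⟨x, hx, rfl⟩
    · intro x hx
      obtain ⟨i, rfl⟩ := mem_factorSet.1 hx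
      have htk : (win w i (n+1)).take n = win w i n := take_win _ _ (by omega)
      by_cases he : win w i (n+1) = v ++ [true]
      · refine ⟨v ++ [false], ⟨hvf, ?_⟩, ?_⟩
        · simp only [hP, Set.mem_insert_iff, Set.mem_singleton_iff]
          push_neg
          constructor
          · simp
          · intro h; apply hne
            have := congrArg (List.take n) h
            rw [List.take_append_of_le_length (by omega),
              List.take_of_length_le (by omega),
              List.take_append_of_le_length (by omega),
              List.take_of_length_le (by omega)] at this
            exact this
        · rw [he] at htk
          rw [List.take_append_of_le_length (by omega),
            List.take_of_length_le (by omega)] at htk ⊢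
          exact htk
      · by_cases he' : win w i (n+1) = v' ++ [true]
        · refine ⟨v' ++ [false], ⟨hv'f, ?_⟩, ?_⟩
          · simp only [hP, Set.mem_insert_iff, Set.mem_singleton_iff]
            push_neg
            constructor
            · intro h; apply hne
              have := congrArg (List.take n) h
              rw [List.take_append_of_le_length (by omega),
                List.take_of_length_le (by omega),
                List.take_append_of_le_length (by omega),
                List.take_of_length_le (by omega)] at this
              exact this.symm
            · simp
          · rw [he'] at htk
            rw [List.take_append_of_le_length (by omega),
              List.take_of_length_le (by omega)] at htk ⊢
            exact htk
        · refine ⟨win w i (n+1), ⟨win_mem _ _ _, ?_⟩, htk⟩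
          simp only [hP, Set.mem_insert_iff, Set.mem_singleton_iff]
          push_neg
          exact ⟨he, he'⟩
  have hfin := factorSet_finite w (n+1)
  have hPsub : P ⊆ factorSet w (n+1) := by
    rintro x (rfl | rfl)
    · exact hvt
    · exact hv't
  have hPcard : P.ncard = 2 := by
    apply Set.ncard_pair
    intro h
    apply hne
    have := congrArg (List.take n) h
    rw [List.take_append_of_le_length (by omega), List.take_of_length_le (by omega),
      List.take_append_of_le_length (by omega), List.take_of_length_le (by omega)] at this
    exact this
  have hunion : (factorSet w (n+1) \ P) ∪ P = factorSet w (n+1) :=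
    Set.diff_union_of_subset hPsub
  have hdisj : Disjoint (factorSet w (n+1) \ P) P := Set.disjoint_sdiff_left
  calc (factorSet w n).ncard + 2
      = ((List.take n) '' (factorSet w (n+1) \ P)).ncard + 2 := by rw [hD]
    _ ≤ (factorSet w (n+1) \ P).ncard + 2 :=
        Nat.add_le_add_right (Set.ncard_image_le (hs := hfin.subset Set.diff_subset)) 2
    _ = (factorSet w (n+1) \ P).ncard + P.ncard := by rw [hPcard]
    _ = ((factorSet w (n+1) \ P) ∪ P).ncard :=
        (Set.ncard_union_eq hdisj (hfin.subset Set.diff_subset) (hfin.subset hPsub)).symm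
    _ = (factorSet w (n+1)).ncard := by rw [hunion]


@[simp] lemma win_zero (w : ℕ → α) (i : ℕ) : win w i 0 = [] := by simp [win]

lemma win_one (w : ℕ → α) (i : ℕ) : win w i 1 = [w i] := by
  have := win_succ w i 0; simpa using this

section Tlemmas
variable {t : ℕ → Bool}

lemma exists_false (hst : ∀ n, 1 ≤ n → (factorSet t n).ncard = n+1) : ∃ p, t p = false := by
  by_contra h
  push_neg at h
  have hall : ∀ p, t p = true := fun p => by
    cases hp : t p with
    | false => exact absurd hp (h p)
    | true => rfl
  have : factorSet t 1 = {[true]} := by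
    ext x; constructor
    · rintro ⟨i, rfl⟩
      show win t i 1 ∈ _
      simp [win_one, hall]
    · rintro rfl
      exact ⟨0, by rw [show ((List.range 1).map fun j => t (0+j)) = win t 0 1 from rfl,
        win_one, hall]⟩
  have h2 := hst 1 le_rfl
  rw [this, Set.ncard_singleton] at h2
  omega

lemma four_factors_absurd (hst : ∀ n, 1 ≤ n → (factorSet t n).ncard = n+1)
    (h11 : [true, true] ∈ factorSet t 2) (h00 : [false, false] ∈ factorSet t 2)
    (h10 : [true, false] ∈ factorSet t 2) (h01 : [false, true] ∈ factorSet t 2) : False := by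
  have hsub : ({[true,true],[true,false],[false,true],[false,false]} : Set (List Bool))
      ⊆ factorSet t 2 := by
    rintro x (rfl | rfl | rfl | rfl) <;> assumption
  have hcard : ({[true,true],[true,false],[false,true],[false,false]} :
      Set (List Bool)).ncard = 4 := by
    rw [Set.ncard_insert_of_notMem (by simp), Set.ncard_insert_of_notMem (by simp),
      Set.ncard_insert_of_notMem (by simp), Set.ncard_singleton]
  have := Set.ncard_le_ncard hsub (factorSet_finite t 2)
  rw [hcard, hst 2 (by omega)] at this
  omega

lemma win_pair (i : ℕ) : win t i 2 = [t i, t (i+1)] := by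
  rw [win_succ, win_one]; rfl

lemma no00 (h0 : t 0 = true) (h1 : t 1 = true)
    (hst : ∀ n, 1 ≤ n → (factorSet t n).ncard = n+1) :
    ∀ k, t k = true ∨ t (k+1) = true := by
  by_contra h
  push_neg at h
  obtain ⟨k, hk0, hk1⟩ := h
  replace hk0 : t k = false := by simpa using hk0
  replace hk1 : t (k+1) = false := by simpa using hk1
  -- least false position
  have hex : ∃ p, t p = false := ⟨k, hk0⟩
  classical
  set p := Nat.find hex with hp
  have hpf : t p = false := Nat.find_spec hex
  have hpmin : ∀ q < p, t q = true := fun q hq => by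
    have := Nat.find_min hex hq
    rwa [Bool.not_eq_false] at this
  have hp2 : 2 ≤ p := by
    rcases Nat.lt_or_ge p 2 with hlt | hge
    · interval_cases p
      · rw [h0] at hpf; exact absurd hpf (by simp)
      · rw [h1] at hpf; exact absurd hpf (by simp)
    · exact hge
  -- all positions ≥ p are false
  have hall : ∀ m, p ≤ m → t m = false := by
    intro m hm
    induction m with
    | zero => omega
    | succ m ih =>
      rcases Nat.lt_or_ge m p with hlt | hge
      · have : p = m + 1 := by omega
        rw [← this]; exact hpf
      · have hmf := ih (by omega)
        cases hm1 : t (m+1) with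
        | false => rfl
        | true =>
          exfalso
          have h01 : [false, true] ∈ factorSet t 2 := by
            have := win_mem t m 2
            rwa [win_pair, hmf, hm1] at this
          have h11 : [true, true] ∈ factorSet t 2 := by
            have := win_mem t 0 2
            rwa [win_pair, h0, h1] at this
          have h00 : [false, false] ∈ factorSet t 2 := by
            have := win_mem t k 2
            rwa [win_pair, hk0, hk1] at this
          have h10 : [true, false] ∈ factorSet t 2 := by
            have := win_mem t (p-1) 2
            rwa [win_pair, hpmin (p-1) (by omega), show p - 1 + 1 = p by omega, hpf]
              at this
          exact four_factors_absurd hst h11 h00 h10 h01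
  -- bounded complexity contradiction
  have hsub : factorSet t (p+1) ⊆
      ↑((Finset.range p).image fun i => win t i (p+1)) ∪ {win t p (p+1)} := by
    rintro x ⟨i, rfl⟩
    rcases Nat.lt_or_ge i p with hlt | hge
    · left; simp only [Finset.coe_image, Set.mem_image, Finset.mem_coe, Finset.mem_range]
      exact ⟨i, by simpa using hlt, rfl⟩
    · right
      show win t i (p+1) ∈ _
      have : win t i (p+1) = win t p (p+1) := by
        unfold win
        apply List.map_congr_left
        intro a _
        rw [hall (i+a) (by omega), hall (p+a) (by omega)]
      simp [this]
  have hle := Set.ncard_le_ncard hsub (by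
    apply Set.Finite.union (Finset.finite_toSet _) (Set.finite_singleton _))
  have h2 : (↑((Finset.range p).image fun i => win t i (p+1)) ∪
      ({win t p (p+1)} : Set (List Bool))).ncard ≤ p + 1 := by
    apply le_trans (Set.ncard_union_le _ _)
    have := Finset.card_image_le (s := Finset.range p) (f := fun i => win t i (p+1))
    rw [Set.ncard_coe_finset, Set.ncard_singleton]
    have := Finset.card_range p
    omega
  rw [hst (p+1) (by omega)] at hle
  omega

lemma unique_RS (hst : ∀ n, 1 ≤ n → (factorSet t n).ncard = n+1) :
    ∀ v v', RS t v → RS t v' → v.length = v'.length → v = v' := by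
  intro v v' hv hv' hlen
  by_contra hne
  rcases Nat.eq_zero_or_pos v.length with h0 | hpos
  · exact hne ((List.length_eq_zero_iff.1 h0).trans (List.length_eq_zero_iff.1 (hlen ▸ h0)).symm)
  · have := ncard_succ_ge_two_of_two_RS hv hv' hne rfl hlen.symm
    rw [hst v.length hpos, hst (v.length+1) (by omega)] at this
    omega

lemma RS_suffix (hst : ∀ n, 1 ≤ n → (factorSet t n).ncard = n+1)
    {v v' : List Bool} (hv : RS t v) (hv' : RS t v') (h : v.length ≤ v'.length) :
    v <:+ v' := by
  have hd := hv'.drop (v'.length - v.length) (by omega)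
  have hlen : (v'.drop (v'.length - v.length)).length = v.length := by
    rw [List.length_drop]; omega
  have heq : v = v'.drop (v'.length - v.length) := unique_RS hst _ _ hv hd hlen.symm
  rw [heq]
  exact List.drop_suffix _ _

end Tlemmas

section Decisions
variable {t : ℕ → Bool}

/-- The expected decision bit for 0-indexed position `j` (actual position `j+1`). -/
def dbit (t : ℕ → Bool) (j : ℕ) : Bool := if j % 2 = 0 then t (j/2) else false

def isMemN (t : ℕ → Bool) (n m : ℕ) : Bool := (decisions t n).getD (m-1) false

def isStarN (t : ℕ → Bool) (n m : ℕ) : Bool :=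
  (List.range n).any fun a => decide (a + 1 < m) && isMemN t n (a+1) && isMemN t n (m - (a+1))

def idxN (t : ℕ → Bool) (n : ℕ) : ℕ :=
  ((List.range n).filter fun m => isStarN t n (m+1) = false).length

lemma decisions_succ (n : ℕ) :
    decisions t (n+1) = decisions t n ++
      [if isStarN t n (n+1) = true then false else t (idxN t n)] := rfl

lemma getD_map_range (f : ℕ → Bool) (n j : ℕ) :
    ((List.range n).map f).getD j false = if j < n then f j else false := by
  split
  · next h =>
    rw [List.getD_eq_getElem _ _ (by simpa using h)]
    simp
  · next h =>
    rw [List.getD_eq_default]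
    simpa using h

lemma filter_even_length (n : ℕ) :
    ((List.range n).filter fun m => m % 2 = 0).length = (n+1)/2 := by
  induction n with
  | zero => rfl
  | succ n ih =>
    rw [List.range_succ, List.filter_append, List.length_append, ih]
    rcases Nat.even_or_odd n with h | h
    · obtain ⟨c, hc⟩ := h
      have : n % 2 = 0 := by omega
      simp [this]
      omega
    · obtain ⟨c, hc⟩ := h
      have : n % 2 ≠ 0 := by omega
      simp [this]
      omega

theorem decisions_eq (h0 : t 0 = true) (h1 : t 1 = true)
    (hno : ∀ k, t k = true ∨ t (k+1) = true) (n : ℕ) :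
    decisions t n = (List.range n).map (dbit t) := by
  induction n with
  | zero => rfl
  | succ n ih =>
    have hmem : ∀ m, 1 ≤ m →
        (isMemN t n m = true ↔ m ≤ n ∧ (m-1) % 2 = 0 ∧ t ((m-1)/2) = true) := by
      intro m hm
      rw [isMemN, ih, getD_map_range]
      constructor
      · intro h
        split at h
        · next hlt =>
          rw [dbit] at h
          split at h
          · next hp => exact ⟨by omega, hp, h⟩
          · exact absurd h (by simp)
        · exact absurd h (by simp)
      · rintro ⟨hle, hp, hv⟩
        rw [if_pos (by omega), dbit, if_pos hp]
        exact hv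
    have hstar : ∀ m, m ≤ n + 1 → isStarN t n m = decide (2 ≤ m ∧ m % 2 = 0) := by
      intro m hm
      rcases Bool.eq_false_or_eq_true (decide (2 ≤ m ∧ m % 2 = 0)) with hdec | hdec
      · -- the condition holds, exhibit a decomposition
        rw [hdec, isStarN, List.any_eq_true]
        rw [decide_eq_true_iff] at hdec
        obtain ⟨hm2, hpar⟩ := hdec
        obtain ⟨l, rfl⟩ : ∃ l, m = 2 * l := ⟨m / 2, by omega⟩
        have hl1 : 1 ≤ l := by omega
        rcases Nat.lt_or_ge l 3 with hl3 | hl3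
        · interval_cases l
          · refine ⟨0, by simp; omega, ?_⟩
            rw [Bool.and_eq_true, Bool.and_eq_true]
            refine ⟨⟨by simp only [decide_eq_true_iff]; omega, ?_⟩, ?_⟩
            · refine (hmem 1 (by omega)).2 ⟨by omega, by omega, ?_⟩
              simpa using h0
            · refine (hmem _ (by omega)).2 ⟨by omega, by omega, ?_⟩
              have e : (2 * 1 - (0+1) - 1) / 2 = 0 := by omega
              rw [e]; exact h0
          · refine ⟨0, by simp; omega, ?_⟩
            rw [Bool.and_eq_true, Bool.and_eq_true]
            refine ⟨⟨by simp only [decide_eq_true_iff]; omega, ?_⟩, ?_⟩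
            · refine (hmem 1 (by omega)).2 ⟨by omega, by omega, ?_⟩
              simpa using h0
            · refine (hmem _ (by omega)).2 ⟨by omega, by omega, ?_⟩
              have e : (2 * 2 - (0+1) - 1) / 2 = 1 := by omega
              rw [e]; exact h1
        · rcases hno (l-2) with htl | htl
          · -- t (l-2) = true : use a = 2, positions 3 and 2l-3
            refine ⟨2, by simp; omega, ?_⟩
            rw [Bool.and_eq_true, Bool.and_eq_true]
            refine ⟨⟨by simp only [decide_eq_true_iff]; omega, ?_⟩, ?_⟩
            · refine (hmem 3 (by omega)).2 ⟨by omega, by omega, ?_⟩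
              have e : ((3:ℕ)-1)/2 = 1 := by omega
              rw [e]; exact h1
            · refine (hmem _ (by omega)).2 ⟨by omega, by omega, ?_⟩
              have e : (2 * l - (2+1) - 1) / 2 = l - 2 := by omega
              rw [e]; exact htl
          · have htl' : t (l-1) = true := by
              have e : l - 2 + 1 = l - 1 := by omega
              rwa [e] at htl
            refine ⟨0, by simp; omega, ?_⟩
            rw [Bool.and_eq_true, Bool.and_eq_true]
            refine ⟨⟨by simp only [decide_eq_true_iff]; omega, ?_⟩, ?_⟩
            · refine (hmem 1 (by omega)).2 ⟨by omega, by omega, ?_⟩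
              simpa using h0
            · refine (hmem _ (by omega)).2 ⟨by omega, by omega, ?_⟩
              have e : (2 * l - (0+1) - 1) / 2 = l - 1 := by omega
              rw [e]; exact htl'
      · rw [hdec, isStarN, List.any_eq_false]
        intro a _
        intro hcontra
        rw [Bool.and_eq_true, Bool.and_eq_true, decide_eq_true_iff] at hcontra
        obtain ⟨⟨hlt, hmem1⟩, hmem2⟩ := hcontra
        rw [decide_eq_false_iff_not] at hdec
        obtain ⟨_, hp1, _⟩ := (hmem (a+1) (by omega)).1 hmem1
        obtain ⟨_, hp2, _⟩ := (hmem (m - (a+1)) (by omega)).1 hmem2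
        omega
    rw [decisions_succ, ih, List.range_succ, List.map_append]
    congr 1
    have hidx : idxN t n = (n+1)/2 := by
      rw [idxN]
      have hcong : ∀ m ∈ List.range n,
          (decide (isStarN t n (m+1) = false)) = decide (m % 2 = 0) := by
        intro m hmr
        rw [List.mem_range] at hmr
        rw [hstar (m+1) (by omega)]
        rcases Bool.eq_false_or_eq_true (decide (2 ≤ m+1 ∧ (m+1) % 2 = 0)) with h | h
        · rw [h]
          have hp := of_decide_eq_true h
          have h3 : m % 2 ≠ 0 := by omega
          simp [h3]
        · rw [h]
          have hp := of_decide_eq_false h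
          have h3 : m % 2 = 0 := by omega
          simp [h3]
      rw [List.filter_congr hcong, filter_even_length]
    rw [hstar (n+1) (by omega), hidx]
    by_cases hP : (2 ≤ n+1 ∧ (n+1) % 2 = 0)
    · rw [if_pos (by simp only [decide_eq_true_iff]; exact hP)]
      have h3 : ¬ (n % 2 = 0) := by omega
      simp [dbit, h3]
    · rw [if_neg (by simp only [decide_eq_true_iff]; exact hP)]
      have e : (n+1)/2 = n/2 := by omega
      have e2 : n % 2 = 0 := by omega
      simp [dbit, e, e2]

theorem memS_iff (h0 : t 0 = true) (h1 : t 1 = true)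
    (hno : ∀ k, t k = true ∨ t (k+1) = true) (m : ℕ) :
    memS t m ↔ m % 2 = 1 ∧ t ((m-1)/2) = true := by
  rw [memS, decisions_eq h0 h1 hno, getD_map_range]
  rcases Nat.eq_zero_or_pos m with rfl | hm
  · constructor
    · intro h
      split at h
      · next hlt =>
        rw [dbit] at h
        exfalso
        omega
      · exact absurd h (by simp)
    · rintro ⟨hp, _⟩
      omega
  · constructor
    · intro h
      split at h
      · next hlt =>
        rw [dbit] at h
        split at h
        · next hp => exact ⟨by omega, h⟩
        · exact absurd h (by simp)
      · exfalso
        omega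
    · rintro ⟨hp, ht⟩
      rw [if_pos (by omega), dbit, if_pos (by omega)]
      exact ht

end Decisions
section Derived
variable {t : ℕ → Bool} {e : ℕ → ℕ}

def blk (b : Bool) : List Bool := if b then [true, false] else [true]

def sig (l : List Bool) : List Bool := l.flatMap blk

def blk' (b : Bool) : List Bool := if b then [false, true] else [true]

def sig' (l : List Bool) : List Bool := l.flatMap blk'

@[simp] lemma sig_nil : sig [] = [] := rfl

@[simp] lemma sig_append (l l' : List Bool) : sig (l ++ l') = sig l ++ sig l' :=
  List.flatMap_append

@[simp] lemma blk_reverse (b : Bool) : (blk b).reverse = blk' b := by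
  cases b <;> rfl

lemma sig_reverse (l : List Bool) : (sig l).reverse = sig' l.reverse := by
  rw [sig, List.reverse_flatMap, sig']
  congr 1
  funext b
  exact blk_reverse b

lemma sig'_nonnil (a : Bool) (l : List Bool) : sig' (a :: l) ≠ [] := by
  cases a <;> simp [sig', blk', List.flatMap_cons]

lemma sig'_prefix : ∀ (v v' : List Bool), sig' v <+: sig' v' → v <+: v'
  | [], _, _ => List.nil_prefix
  | a :: v, [], h => by
    exfalso
    exact sig'_nonnil a v (List.prefix_nil.mp (by simpa [sig'] using h))
  | a :: v, b :: v', h => by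
    have hs : sig' (a :: v) = blk' a ++ sig' v := by simp [sig', List.flatMap_cons]
    have hs' : sig' (b :: v') = blk' b ++ sig' v' := by simp [sig', List.flatMap_cons]
    rw [hs, hs'] at h
    have hab : a = b := by
      cases a <;> cases b <;> first
        | rfl
        | (exfalso
           simp only [blk', if_true, if_false, List.cons_append, List.cons_prefix_cons] at h
           simp at h)
    subst hab
    rw [List.prefix_append_right_inj] at h
    exact (List.cons_prefix_cons).2 ⟨rfl, sig'_prefix v v' h⟩

lemma decode_suffix {w w' : List Bool} (h : sig w ++ [true] <:+ sig w' ++ [true]) :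
    w <:+ w' := by
  rw [← List.reverse_prefix] at h ⊢
  rw [List.reverse_append, List.reverse_append] at h
  simp only [List.reverse_singleton, List.singleton_append] at h
  rw [List.cons_prefix_cons] at h
  rw [sig_reverse, sig_reverse] at h
  exact sig'_prefix _ _ h.2

variable (he0 : e 0 = 0) (hone : ∀ n, t (e n) = true)
  (hsucc : ∀ n, e (n+1) = if t (e n + 1) = true then e n + 1 else e n + 2)

/-- The derived (coding) sequence. -/
def du (t : ℕ → Bool) (e : ℕ → ℕ) : ℕ → Bool := fun n => !t (e n + 1)

include hsucc in
lemma e_step (n : ℕ) : e (n+1) = e n + 1 ∨ e (n+1) = e n + 2 := by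
  rw [hsucc n]; split <;> simp

include hsucc in
lemma e_add_le (i m : ℕ) : e i + m ≤ e (i + m) := by
  induction m with
  | zero => simp
  | succ m ih =>
    have h2 := e_step hsucc (i + m)
    have h3 : i + (m+1) = (i+m)+1 := by omega
    rw [h3]
    omega

include hone hsucc in
lemma e_block (n : ℕ) : win t (e n) (e (n+1) - e n) = blk (du t e n) := by
  rw [hsucc n]
  cases hb : t (e n + 1) with
  | true =>
    rw [if_pos rfl]
    have h1 : e n + 1 - e n = 1 := by omega
    rw [h1, win_one, du, hone n]
    simp [hb, blk]
  | false =>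
    rw [if_neg (by simp [hb])]
    have h1 : e n + 2 - e n = 2 := by omega
    rw [h1, win_pair, du, hone n]
    simp [hb, blk]

include hone hsucc in
lemma win_sig (i : ℕ) : ∀ n, win t (e i) (e (i+n) - e i) = sig (win (du t e) i n) := by
  intro n
  induction n with
  | zero => simp
  | succ n ih =>
    rw [win_succ, sig_append]
    rw [show i + (n+1) = (i+n)+1 by omega]
    have harith : e ((i+n)+1) - e i = (e (i+n) - e i) + (e ((i+n)+1) - e (i+n)) := by
      have h1 := e_add_le hsucc i n
      have h2 := e_step hsucc (i+n)
      omega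
    rw [harith, win_add]
    have h1 := e_add_le hsucc i n
    have h4 : e i + (e (i+n) - e i) = e (i+n) := by omega
    rw [h4, ih, e_block hone hsucc]
    congr 1
    cases hb : (du t e) (i+n) <;> simp [sig, blk, List.flatMap_cons, hb]

include hone hsucc in
lemma occ_ext {w : List Bool} {i n : ℕ} (hw : w = win (du t e) i n) :
    sig w ++ [true] = win t (e i) ((e (i+n) - e i) + 1) := by
  rw [win_succ]
  have h1 := e_add_le hsucc i n
  have h4 : e i + (e (i+n) - e i) = e (i+n) := by omega
  rw [h4, hone (i+n), hw, ← win_sig hone hsucc]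

include hone hsucc in
lemma RS_transfer {w : List Bool} (hw : RS (du t e) w) : RS t (sig w ++ [true]) := by
  obtain ⟨hf, ht⟩ := hw
  obtain ⟨i, hi⟩ := mem_factorSet.1 hf
  obtain ⟨i', hi'⟩ := mem_factorSet.1 ht
  set n := w.length with hn
  have hlen : ∀ (j m : ℕ) (x : List Bool), x = win (du t e) j m →
      sig x = win t (e j) (e (j+m) - e j) := by
    intro j m x hx
    rw [hx, win_sig hone hsucc]
  constructor
  · -- (sig w ++ [true]) ++ [false] comes from w ++ [true]
    have h1 : sig (w ++ [true]) = win t (e i') (e (i'+(n+1)) - e i') := hlen _ _ _ hi'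
    have h2 : sig (w ++ [true]) = sig w ++ [true, false] := by
      simp [sig_append, sig, blk, List.flatMap_cons]
    have hL : e (i'+(n+1)) - e i' = (sig w ++ [true]).length + 1 := by
      have h5 := congrArg List.length h1
      rw [h2] at h5
      simp only [length_win] at h5
      simp only [List.length_append, List.length_cons, List.length_nil] at h5 ⊢
      omega
    have h3 : sig w ++ [true] ++ [false] = win t (e i') (e (i'+(n+1)) - e i') := by
      rw [← h1, h2, List.append_assoc]
      rfl
    rw [show (sig w ++ [true]).length + 1 = e (i'+(n+1)) - e i' by omega]
    exact ⟨e i', h3⟩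
  · -- (sig w ++ [true]) ++ [true] comes from w ++ [false]
    have h1 : sig (w ++ [false]) = win t (e i) (e (i+(n+1)) - e i) := hlen _ _ _ hi
    have h2 : sig (w ++ [false]) = sig w ++ [true] := by
      simp [sig_append, sig, blk, List.flatMap_cons]
    have hL : e (i+(n+1)) - e i = (sig w ++ [true]).length := by
      have h5 := congrArg List.length h1
      rw [h2] at h5
      simp only [length_win] at h5
      omega
    have h3 : sig w ++ [true] ++ [true] =
        win t (e i) ((e (i+(n+1)) - e i) + 1) := by
      rw [win_succ, ← h1, h2]
      congr 2
      have h4 : e i + (e (i+(n+1)) - e i) = e (i+(n+1)) := by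
        have := e_add_le hsucc i (n+1); omega
      rw [h4, hone]
    rw [show (sig w ++ [true]).length + 1 = (e (i+(n+1)) - e i) + 1 by omega]
    exact ⟨e i, h3⟩

include hone hsucc in
lemma unique_RS_du (hst : ∀ n, 1 ≤ n → (factorSet t n).ncard = n+1) :
    ∀ w w', RS (du t e) w → RS (du t e) w' → w.length = w'.length → w = w' := by
  intro w w' hw hw' hlen
  have hR := RS_transfer hone hsucc hw
  have hR' := RS_transfer hone hsucc hw'
  rcases le_total (sig w ++ [true]).length (sig w' ++ [true]).length with hle | hle
  · have hsuf := RS_suffix hst hR hR' hle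
    have := decode_suffix hsuf
    exact this.eq_of_length hlen
  · have hsuf := RS_suffix hst hR' hR hle
    have := decode_suffix hsuf
    exact (this.eq_of_length hlen.symm).symm

include he0 hsucc in
lemma block_index (j : ℕ) : ∃ i, e i ≤ j ∧ j < e (i+1) := by
  classical
  have hself : ∀ m, m ≤ e m := by
    intro m
    have := e_add_le hsucc 0 m
    simp [he0] at this
    omega
  set P : ℕ → Prop := fun i => e i ≤ j with hP
  have hP0 : P 0 := by simp [hP, he0]
  set i := Nat.findGreatest P j with hi
  have hPi : P i := Nat.findGreatest_spec (Nat.zero_le j) hP0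
  refine ⟨i, hPi, ?_⟩
  by_contra hcon
  push_neg at hcon
  have hlt : i < i + 1 := Nat.lt_succ_self i
  have : ¬ P (i+1) := Nat.findGreatest_is_greatest (hi ▸ hlt) (by
    have := hself (i+1)
    omega)
  exact this hcon

include he0 hone hsucc in
lemma factor_decomp (m j : ℕ) (hm : 1 ≤ m) :
    ∃ i δ, δ ≤ 1 ∧ win t j m = ((sig (win (du t e) i m)).drop δ).take m := by
  obtain ⟨i, hij, hij'⟩ := block_index he0 hsucc j
  have hstep := e_step hsucc i
  set δ := j - e i with hδ
  have hδ1 : δ ≤ 1 := by omega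
  refine ⟨i, δ, hδ1, ?_⟩
  have hlong : e i + δ + m ≤ e (i+m) := by
    rcases Nat.eq_zero_or_pos δ with h0 | h1
    · have := e_add_le hsucc i m
      omega
    · have hδe : δ = 1 := by omega
      have h2 : e (i+1) = e i + 2 := by omega
      have h3 := e_add_le hsucc (i+1) (m-1)
      rw [show (i+1) + (m-1) = i + m by omega] at h3
      omega
  rw [← win_sig hone hsucc]
  rw [drop_win _ _ _ _ (by omega), take_win _ _ (by omega)]
  congr 1
  omega

include he0 hone hsucc in
lemma ncard_t_le_two_mul (m : ℕ) (hm : 1 ≤ m) :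
    (factorSet t m).ncard ≤ 2 * (factorSet (du t e) m).ncard := by
  set g : List Bool × Bool → List Bool :=
    fun p => ((sig p.1).drop (if p.2 then 1 else 0)).take m with hg
  set A : Set (List Bool × Bool) :=
    ((fun v => (v, false)) '' factorSet (du t e) m) ∪
    ((fun v => (v, true)) '' factorSet (du t e) m) with hA
  have hAfin : A.Finite := by
    apply Set.Finite.union <;> exact (factorSet_finite _ m).image _
  have hsub : factorSet t m ⊆ g '' A := by
    rintro x ⟨j, rfl⟩
    obtain ⟨i, δ, hδ, hEq⟩ := factor_decomp he0 hone hsucc m j hm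
    rcases Nat.eq_zero_or_pos δ with h0 | h1
    · refine ⟨(win (du t e) i m, false), Or.inl ⟨_, win_mem _ _ _, rfl⟩, ?_⟩
      rw [hg]
      simp only [if_neg (by simp : ¬ (false = true))]
      rw [← h0]
      exact hEq.symm
    · have hδe : δ = 1 := by omega
      refine ⟨(win (du t e) i m, true), Or.inr ⟨_, win_mem _ _ _, rfl⟩, ?_⟩
      rw [hg]
      simp only [if_pos rfl]
      rw [← hδe]
      exact hEq.symm
  calc (factorSet t m).ncard ≤ (g '' A).ncard :=
        Set.ncard_le_ncard hsub (hAfin.image g)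
    _ ≤ A.ncard := Set.ncard_image_le hAfin
    _ ≤ ((fun v => (v, false)) '' factorSet (du t e) m).ncard
        + ((fun v => (v, true)) '' factorSet (du t e) m).ncard :=
        Set.ncard_union_le _ _
    _ ≤ 2 * (factorSet (du t e) m).ncard := by
        rw [Set.ncard_image_of_injective _ (fun a b h => congrArg Prod.fst h),
          Set.ncard_image_of_injective _ (fun a b h => congrArg Prod.fst h)]
        omega

include he0 hone hsucc in
lemma exists_RS_du (hst : ∀ n, 1 ≤ n → (factorSet t n).ncard = n+1) (n : ℕ) :
    ∃ w, RS (du t e) w ∧ w.length = n := by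
  by_contra h
  have hnone : ∀ m, n ≤ m → ¬ ∃ w, RS (du t e) w ∧ w.length = m := by
    intro m hmn
    induction m with
    | zero =>
      have : n = 0 := by omega
      rw [← this]
      exact h
    | succ m ih =>
      rcases Nat.lt_or_ge m n with hlt | hge
      · have : n = m + 1 := by omega
        rw [← this]
        exact h
      · rintro ⟨w, hw, hwl⟩
        exact ih hge ⟨w.drop 1, hw.drop 1 (by omega), by rw [List.length_drop]; omega⟩
  have hconst : ∀ m, n ≤ m → (factorSet (du t e) m).ncard = (factorSet (du t e) n).ncard := by
    intro m hmn
    induction m with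
    | zero =>
      have : n = 0 := by omega
      rw [this]
    | succ m ih =>
      rcases Nat.lt_or_ge m n with hlt | hge
      · have : n = m + 1 := by omega
        rw [this]
      · rw [ncard_succ_eq_of_no_RS (by
          intro hc
          obtain ⟨v, hv, hvl⟩ := hc
          exact hnone m hge ⟨v, hv, hvl⟩), ih hge]
  set C := (factorSet (du t e) n).ncard with hC
  set m := n + 2*C + 2 with hm
  have h1 := hst m (by omega)
  have h2 := ncard_t_le_two_mul he0 hone hsucc m (by omega)
  rw [hconst m (by omega)] at h2
  omega

include he0 hone hsucc in
lemma du_sturmian (hst : ∀ n, 1 ≤ n → (factorSet t n).ncard = n+1)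
    (hw0 : ∃ a, du t e a = false) (hw1 : ∃ a, du t e a = true) :
    ∀ n, 1 ≤ n → (factorSet (du t e) n).ncard = n + 1 := by
  have hbase : (factorSet (du t e) 1).ncard = 2 := by
    have heq : factorSet (du t e) 1 = {[false], [true]} := by
      apply Set.Subset.antisymm
      · rintro x ⟨i, rfl⟩
        rw [show (List.map (fun j => du t e (i+j)) (List.range 1)) = win (du t e) i 1 from rfl,
          win_one]
        cases h : du t e i
        · left; rfl
        · right; rfl
      · rintro x (rfl | rfl)
        · obtain ⟨a, ha⟩ := hw0
          refine ⟨a, ?_⟩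
          rw [show (List.map (fun j => du t e (a+j)) (List.range 1)) = win (du t e) a 1 from rfl,
            win_one, ha]
        · obtain ⟨a, ha⟩ := hw1
          refine ⟨a, ?_⟩
          rw [show (List.map (fun j => du t e (a+j)) (List.range 1)) = win (du t e) a 1 from rfl,
            win_one, ha]
    rw [heq, Set.ncard_pair (by simp)]
  intro n hn
  induction n with
  | zero => omega
  | succ n ih =>
    rcases Nat.eq_zero_or_pos n with rfl | hpos
    · simpa using hbase
    · have hih := ih hpos
      obtain ⟨w, hw, hwl⟩ := exists_RS_du he0 hone hsucc hst n
      have hge := ncard_succ_ge_of_RS hw hwl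
      have hle := ncard_succ_le_of_unique_RS (n := n) (w := du t e) (by
        intro v v' hv hv' hl hl'
        exact unique_RS_du hone hsucc hst v v' hv hv' (by omega))
      omega

end Derived

lemma factorSet_comp_inj {γ : Type*} (f : Bool → γ) (hf : Function.Injective f)
    (u : ℕ → Bool) (n : ℕ) :
    (factorSet (fun k => f (u k)) n).ncard = (factorSet u n).ncard := by
  have himg : factorSet (fun k => f (u k)) n = (List.map f) '' factorSet u n := by
    ext x
    constructor
    · rintro ⟨i, rfl⟩
      exact ⟨win u i n, win_mem _ _ _, by simp [win]⟩
    · rintro ⟨y, ⟨i, rfl⟩, rfl⟩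
      exact ⟨i, by simp [win]⟩
  rw [himg, Set.ncard_image_of_injective _ (List.map_injective_iff.2 hf)]

end SAux

theorem stmt_18 (t : ℕ → Bool) (hstur : IsSturmian t) (h0 : t 0 = true) (h1 : t 1 = true)
    (s : ℕ → ℕ) (hmono : StrictMono s) (hmem : ∀ n, memS t (s n))
    (hsurj : ∀ m, memS t m → ∃ n, s n = m) :
    (∀ n, s (n + 1) - s n = 2 ∨ s (n + 1) - s n = 4) ∧
      (∃ u : ℕ → Bool, IsSturmian u ∧ ∀ n, s (n + 1) - s n = if u n then 4 else 2) ∧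
      IsSturmian fun n => s (n + 1) - s n := by
  classical
  have hst : ∀ n, 1 ≤ n → (factorSet t n).ncard = n + 1 := hstur
  have hno := SAux.no00 h0 h1 hst
  have hmemiff := SAux.memS_iff h0 h1 hno
  have hodd : ∀ n, s n % 2 = 1 ∧ t ((s n - 1)/2) = true := fun n => (hmemiff (s n)).1 (hmem n)
  set e : ℕ → ℕ := fun n => (s n - 1) / 2 with he
  have hen : ∀ n, e n = (s n - 1)/2 := fun n => by rw [he]
  have hs_eq : ∀ n, s n = 2 * e n + 1 := by
    intro n
    have h := (hodd n).1
    have h2 := hen n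
    omega
  have hone : ∀ n, t (e n) = true := fun n => (hodd n).2
  have hemono : StrictMono e := by
    intro a b hab
    have h := hmono hab
    have ha := hs_eq a
    have hb := hs_eq b
    omega
  have hesurj : ∀ k, t k = true → ∃ n, e n = k := by
    intro k hk
    have hm2 : memS t (2*k+1) := by
      rw [hmemiff]
      refine ⟨by omega, ?_⟩
      rw [show (2*k+1-1)/2 = k by omega]
      exact hk
    obtain ⟨n, hn⟩ := hsurj (2*k+1) hm2
    refine ⟨n, ?_⟩
    have := hs_eq n
    omega
  have he0 : e 0 = 0 := by
    obtain ⟨n, hn⟩ := hesurj 0 h0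
    rcases Nat.eq_zero_or_pos n with rfl | hp
    · exact hn
    · have := hemono hp
      omega
  have hmid : ∀ n k, e n < k → k < e (n+1) → t k = false := by
    intro n k hk1 hk2
    by_contra hk
    rw [Bool.not_eq_false] at hk
    obtain ⟨j, hj⟩ := hesurj k hk
    rcases Nat.lt_or_ge j (n+1) with hle | hge
    · have : e j ≤ e n := by
        rcases Nat.lt_or_ge j n with h | h
        · exact (hemono h).le
        · have : j = n := by omega
          rw [this]
      omega
    · have : e (n+1) ≤ e j := by
        rcases Nat.lt_or_ge (n+1) j with h | h
        · exact (hemono h).le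
        · have : j = n + 1 := by omega
          rw [this]
      omega
  have hsucc : ∀ n, e (n+1) = if t (e n + 1) = true then e n + 1 else e n + 2 := by
    intro n
    have hlt : e n < e (n+1) := hemono (Nat.lt_succ_self n)
    cases hb : t (e n + 1) with
    | true =>
      rw [if_pos rfl]
      by_contra hne
      have h2 : e n + 1 < e (n+1) := by omega
      have := hmid n (e n + 1) (by omega) h2
      rw [hb] at this
      exact absurd this (by simp)
    | false =>
      rw [if_neg (by simp [hb])]
      have hne1 : e (n+1) ≠ e n + 1 := by
        intro hEq
        have := hone (n+1)
        rw [hEq, hb] at this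
        exact absurd this (by simp)
      by_contra hne
      have h3 : e n + 2 < e (n+1) := by omega
      have hf2 : t (e n + 2) = false := hmid n (e n + 2) (by omega) h3
      rcases hno (e n + 1) with hc | hc
      · rw [hb] at hc
        exact absurd hc (by simp)
      · rw [show e n + 1 + 1 = e n + 2 by omega, hf2] at hc
        exact absurd hc (by simp)
  have hdiff : ∀ n, s (n+1) - s n = if SAux.du t e n then 4 else 2 := by
    intro n
    have ha := hs_eq n
    have hb2 := hs_eq (n+1)
    have h3 := hsucc n
    have hd : SAux.du t e n = !t (e n + 1) := rfl
    cases hb : t (e n + 1) with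
    | true =>
      rw [hb] at h3
      simp only [if_true] at h3
      rw [hd, hb]
      simp only [Bool.not_true, Bool.false_eq_true, if_false]
      omega
    | false =>
      rw [hb] at h3
      simp at h3
      rw [hd, hb]
      simp only [Bool.not_false, if_true]
      omega
  have hw0 : ∃ a, SAux.du t e a = false := by
    refine ⟨0, ?_⟩
    have hd : SAux.du t e 0 = !t (e 0 + 1) := rfl
    rw [hd, he0, h1]
    rfl
  have hw1 : ∃ a, SAux.du t e a = true := by
    obtain ⟨p, hp⟩ := SAux.exists_false hst
    have hpge : 1 ≤ p := by
      rcases Nat.eq_zero_or_pos p with rfl | h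
      · rw [h0] at hp
        exact absurd hp (by simp)
      · exact h
    have hp1 : t (p-1) = true := by
      rcases hno (p-1) with hc | hc
      · exact hc
      · rw [show p-1+1 = p by omega, hp] at hc
        exact absurd hc (by simp)
    obtain ⟨a, ha⟩ := hesurj (p-1) hp1
    refine ⟨a, ?_⟩
    have hd : SAux.du t e a = !t (e a + 1) := rfl
    rw [hd, ha, show p-1+1 = p by omega, hp]
    rfl
  have hstu : IsSturmian (SAux.du t e) :=
    SAux.du_sturmian he0 hone hsucc hst hw0 hw1
  refine ⟨?_, ⟨SAux.du t e, hstu, hdiff⟩, ?_⟩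
  · intro n
    rw [hdiff n]
    rcases Bool.eq_false_or_eq_true (SAux.du t e n) with h | h <;> simp [h]
  · set f : Bool → ℕ := fun b => if b then 4 else 2 with hf
    have hfinj : Function.Injective f := by
      intro a b hab
      have h2 : (if a then 4 else 2 : ℕ) = (if b then 4 else 2) := hab
      cases a <;> cases b
      · rfl
      · exact absurd h2 (by norm_num)
      · exact absurd h2 (by norm_num)
      · rfl
    have hcomp : (fun n => s (n+1) - s n) = (fun k => f (SAux.du t e k)) := by
      funext n
      rw [hdiff n, hf]
    intro n hn
    rw [hcomp, SAux.factorSet_comp_inj f hfinj (SAux.du t e) n]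
    exact hstu n hn
end

section
/- Let t be a Sturmian sequence over {0,1} in which the factor '00' does not occur, and let u = (μ_n)_{n≥1} where μ_n is the number of 0's between the n-th and (n+1)-th occurrence of 1 in t. Then μ_n ∈ {0,1} for all n, t = φ(u) up to a possible initial 0 (where φ: 0 → 1, 1 → 10 applied after t's first 1), and u is again a Sturmian sequence. -/
namespace StAux
variable {α : Type*}

def win (x : ℕ → α) (p n : ℕ) : List α := (List.range n).map fun j => x (p + j)

@[simp] lemma win_length (x : ℕ → α) (p n : ℕ) : (win x p n).length = n := by
  simp [win]

@[simp] lemma win_zero (x : ℕ → α) (p : ℕ) : win x p 0 = [] := rfl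

lemma win_one (x : ℕ → α) (p : ℕ) : win x p 1 = [x p] := by
  simp [win, List.range_succ]

lemma win_succ (x : ℕ → α) (p n : ℕ) : win x p (n+1) = win x p n ++ [x (p+n)] := by
  simp [win, List.range_succ]

lemma win_add (x : ℕ → α) (p m n : ℕ) :
    win x p (m+n) = win x p m ++ win x (p+m) n := by
  simp only [win, List.range_add, List.map_append, List.map_map]
  congr 1
  apply List.map_congr_left
  intro a _
  simp [Function.comp]; ring_nf

lemma win_getElem (x : ℕ → α) (p : ℕ) {j n : ℕ} (h : j < n) :
    (win x p n)[j]'(by simpa using h) = x (p + j) := by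
  simp [win]

lemma win_eq_iff {x : ℕ → α} {p r n : ℕ} :
    win x p n = win x r n ↔ ∀ j < n, x (p + j) = x (r + j) := by
  constructor
  · intro h j hj
    have := congrArg (fun l => l[j]?) h
    simpa [win, hj] using this
  · intro h
    apply List.ext_getElem (by simp)
    intro j h1 h2
    simp only [win_length] at h1
    rw [win_getElem x p h1, win_getElem x r h1]
    exact h j h1

lemma win_take (x : ℕ → α) (p : ℕ) {m n : ℕ} (h : m ≤ n) :
    (win x p n).take m = win x p m := by
  simp [win, ← List.map_take, List.take_range, Nat.min_eq_left h]

lemma win_drop (x : ℕ → α) (p m n : ℕ) :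
    (win x p n).drop m = win x (p + m) (n - m) := by
  rcases le_total m n with h | h
  · have : n = m + (n - m) := by omega
    rw [this, win_add]
    simp
  · rw [Nat.sub_eq_zero_of_le h, List.drop_eq_nil_of_le (by simpa using h)]
    rfl

lemma factorSet_def (x : ℕ → α) (n : ℕ) : factorSet x n = {w | ∃ i, w = win x i n} := rfl

lemma win_mem (x : ℕ → α) (i n : ℕ) : win x i n ∈ factorSet x n := ⟨i, rfl⟩

lemma length_of_mem {x : ℕ → α} {w : List α} {n : ℕ} (h : w ∈ factorSet x n) :
    w.length = n := by
  obtain ⟨i, rfl⟩ := h; simp [win]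


section Complexity
variable {α : Type*} (x : ℕ → α)

lemma listset_finite (S : Set α) (hS : S.Finite) :
    ∀ n : ℕ, {l : List α | l.length = n ∧ ∀ a ∈ l, a ∈ S}.Finite
  | 0 => by
    apply Set.Finite.subset (Set.finite_singleton ([] : List α))
    rintro l ⟨h, -⟩
    simp [List.length_eq_zero_iff.mp h]
  | (n+1) => by
    have hrec := listset_finite S hS n
    apply Set.Finite.subset (Set.Finite.image (fun p : α × List α => p.1 :: p.2) (hS.prod hrec))
    rintro l ⟨hlen, hmem⟩
    cases l with
    | nil => simp at hlen
    | cons a l =>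
      refine ⟨(a, l), ⟨hmem a (by simp), ?_, fun b hb => hmem b (by simp [hb])⟩, rfl⟩
      simpa using hlen

lemma factorSet_finite (S : Set α) (hS : S.Finite) (hx : ∀ i, x i ∈ S) (n : ℕ) :
    (factorSet x n).Finite := by
  apply Set.Finite.subset (listset_finite S hS n)
  rintro _ ⟨i, rfl⟩
  refine ⟨by simp [win], ?_⟩
  intro a ha
  simp only [List.mem_map, List.mem_range] at ha
  obtain ⟨j, -, rfl⟩ := ha
  exact hx _

open Classical in
noncomputable def occ (v : List α) : ℕ :=
  if h : ∃ i, v = win x i v.length then h.choose else 0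

lemma mem_factorSet {x : ℕ → α} {w : List α} {n : ℕ} :
    w ∈ factorSet x n ↔ ∃ i, w = win x i n := Iff.rfl

lemma occ_spec {v : List α} {n : ℕ} (hv : v ∈ factorSet x n) : v = win x (occ x v) n := by
  have hvl : v.length = n := length_of_mem hv
  obtain ⟨i, hi⟩ := mem_factorSet.mp hv
  have hex : ∃ j, v = win x j v.length := ⟨i, by rw [hvl]; exact hi⟩
  rw [occ, dif_pos hex]
  have h2 := hex.choose_spec
  rw [← hvl]
  exact h2

noncomputable def ext1 (v : List α) : List α := v ++ [x (occ x v + v.length)]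

lemma ext1_mem {v : List α} {n : ℕ} (hv : v ∈ factorSet x n) :
    ext1 x v ∈ factorSet x (n+1) := by
  refine ⟨occ x v, ?_⟩
  show ext1 x v = win x (occ x v) (n+1)
  rw [win_succ, ext1, length_of_mem hv]
  congr 1
  exact occ_spec x hv

lemma take_eq_of_mem {v : List α} {n : ℕ} (hv : v ∈ factorSet x n) :
    (v ++ [x (occ x v + v.length)]).take n = v := by
  conv_lhs => rw [← length_of_mem hv]
  exact List.take_left

lemma ext1_injOn (n : ℕ) : Set.InjOn (ext1 x) (factorSet x n) := by
  intro v hv v' hv' h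
  have h1 := take_eq_of_mem x hv
  have h2 := take_eq_of_mem x hv'
  rw [← h1, ← h2]
  unfold ext1 at h
  rw [h]

lemma factorSet_eq_image_take (n : ℕ) :
    factorSet x n = List.take n '' factorSet x (n+1) := by
  ext v
  constructor
  · intro hv
    obtain ⟨i, hi⟩ := mem_factorSet.mp hv
    refine ⟨win x i (n+1), win_mem x i (n+1), ?_⟩
    rw [win_take x i (Nat.le_succ n)]
    exact hi.symm
  · rintro ⟨w, hw, rfl⟩
    obtain ⟨i, hi⟩ := mem_factorSet.mp hw
    exact mem_factorSet.mpr ⟨i, by rw [hi, win_take x i (Nat.le_succ n)]⟩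

lemma ncard_mono (n : ℕ) (hfin : (factorSet x (n+1)).Finite) :
    (factorSet x n).ncard ≤ (factorSet x (n+1)).ncard := by
  rw [factorSet_eq_image_take]
  exact Set.ncard_image_le hfin

lemma det_of_card_le {n : ℕ} (hfin : (factorSet x (n+1)).Finite)
    (hle : (factorSet x (n+1)).ncard ≤ (factorSet x n).ncard) :
    ∀ i j, win x i n = win x j n → x (i + n) = x (j + n) := by
  have himg : ext1 x '' factorSet x n ⊆ factorSet x (n+1) := by
    rintro _ ⟨v, hv, rfl⟩; exact ext1_mem x hv
  have hcard : (factorSet x (n+1)).ncard ≤ (ext1 x '' factorSet x n).ncard := by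
    rw [Set.ncard_image_of_injOn (ext1_injOn x n)]; exact hle
  have heq : ext1 x '' factorSet x n = factorSet x (n+1) :=
    Set.eq_of_subset_of_ncard_le himg hcard hfin
  have main : ∀ i, x (i + n) = x (occ x (win x i n) + n) := by
    intro i
    have hi : win x i (n+1) ∈ ext1 x '' factorSet x n := by
      rw [heq]; exact win_mem x i (n+1)
    obtain ⟨v, hv, hvi⟩ := hi
    have hvl : v.length = n := length_of_mem hv
    have hveq : v = win x i n := by
      have h2 : (ext1 x v).take n = v := take_eq_of_mem x hv
      rw [hvi, win_take x i (Nat.le_succ n)] at h2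
      exact h2.symm
    have hlast : win x i (n+1) = v ++ [x (occ x v + n)] := by
      rw [← hvi]; unfold ext1; rw [hvl]
    rw [win_succ, ← hveq] at hlast
    have h3 := List.append_inj_right hlast rfl
    have h4 := List.singleton_inj.mp h3
    rw [hveq] at h4
    exact h4
  intro i j hij
  rw [main i, main j, hij]

lemma exists_win_repeat {n : ℕ} (hfin : (factorSet x n).Finite) :
    ∃ i j, i < j ∧ win x i n = win x j n := by
  by_contra hcon
  push_neg at hcon
  set K := (factorSet x n).ncard with hK
  have hinj : Set.InjOn (fun i => win x i n) ↑(Finset.range (K+1)) := by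
    intro i _ j _ hw
    rcases lt_trichotomy i j with h | h | h
    · exact absurd hw (hcon i j h)
    · exact h
    · exact absurd hw.symm (hcon j i h)
  have h1 : ((fun i => win x i n) '' ↑(Finset.range (K+1))).ncard = K+1 := by
    rw [Set.ncard_image_of_injOn hinj, Set.ncard_coe_finset, Finset.card_range]
  have h2 : ((fun i => win x i n) '' ↑(Finset.range (K+1))) ⊆ factorSet x n := by
    rintro _ ⟨i, -, rfl⟩; exact win_mem x i n
  have := Set.ncard_le_ncard h2 hfin
  omega

lemma period_of_det {n : ℕ} (hn : 1 ≤ n)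
    (hdet : ∀ i j, win x i n = win x j n → x (i+n) = x (j+n))
    {i j : ℕ} (hij : i < j) (hw : win x i n = win x j n) :
    ∀ m, i ≤ m → x (m + (j - i)) = x m := by
  have key : ∀ d, win x (i+d) n = win x (j+d) n := by
    intro d
    induction d with
    | zero => simpa using hw
    | succ d ih =>
      rw [win_eq_iff] at ih ⊢
      intro k hk
      rcases Nat.lt_or_ge (k+1) n with h | h
      · have h2 := ih (k+1) h
        have e1 : i + (d+1) + k = i + d + (k+1) := by omega
        have e2 : j + (d+1) + k = j + d + (k+1) := by omega
        rw [e1, e2]; exact h2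
      · have hk1 : k + 1 = n := by omega
        have h2 := hdet (i+d) (j+d) (win_eq_iff.mpr ih)
        have e1 : i + (d+1) + k = i + d + n := by omega
        have e2 : j + (d+1) + k = j + d + n := by omega
        rw [e1, e2]; exact h2
  intro m hm
  have h3 := win_eq_iff.mp (key (m - i)) 0 hn
  have e1 : i + (m - i) + 0 = m := by omega
  have e2 : j + (m - i) + 0 = m + (j - i) := by omega
  rw [e1, e2] at h3
  exact h3.symm

lemma ncard_le_of_period {P N : ℕ} (hP : 1 ≤ P) (hper : ∀ m, N ≤ m → x (m + P) = x m)
    (n : ℕ) : (factorSet x n).ncard ≤ N + P := by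
  have key : ∀ i, ∃ p, p < N + P ∧ win x p n = win x i n := by
    intro i
    induction i using Nat.strong_induction_on with
    | _ i ih =>
      by_cases hi : i < N + P
      · exact ⟨i, hi, rfl⟩
      · push_neg at hi
        have hstep : win x (i - P) n = win x i n := by
          rw [win_eq_iff]
          intro k hk
          have := hper (i - P + k) (by omega)
          have e : i - P + k + P = i + k := by omega
          rw [e] at this
          exact this.symm
        obtain ⟨p, hp, heq⟩ := ih (i - P) (by omega)
        exact ⟨p, hp, heq.trans hstep⟩
  have hsub : factorSet x n ⊆ (fun p => win x p n) '' ↑(Finset.range (N + P)) := by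
    rintro _ ⟨i, rfl⟩
    obtain ⟨p, hp, heq⟩ := key i
    exact ⟨p, by simpa using hp, heq⟩
  calc (factorSet x n).ncard ≤ ((fun p => win x p n) '' ↑(Finset.range (N + P))).ncard :=
        Set.ncard_le_ncard hsub ((Finset.range (N+P)).finite_toSet.image _)
    _ ≤ (↑(Finset.range (N + P)) : Set ℕ).ncard := Set.ncard_image_le (Finset.range (N+P)).finite_toSet
    _ = N + P := by rw [Set.ncard_coe_finset, Finset.card_range]

end Complexity

section TStruct

def blockb (a : ℕ) : List Bool := if a = 0 then [true] else [true, false]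

def phib (v : List ℕ) : List Bool := v.flatMap blockb

@[simp] lemma phib_nil : phib [] = [] := rfl

lemma phib_append (v w : List ℕ) : phib (v ++ w) = phib v ++ phib w :=
  List.flatMap_append ..

lemma phib_singleton (a : ℕ) : phib [a] = blockb a := by simp [phib, blockb]

lemma phib_eq_nil {v : List ℕ} (h : phib v = []) : v = [] := by
  cases v with
  | nil => rfl
  | cons a l =>
    exfalso
    have : phib (a :: l) = blockb a ++ phib l := rfl
    rw [this] at h
    unfold blockb at h
    by_cases ha : a = 0 <;> simp [ha] at h

variable (t : ℕ → Bool) (q : ℕ → ℕ) (μ : ℕ → ℕ)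

lemma win_two (x : ℕ → Bool) (p : ℕ) : win x p 2 = [x p, x (p+1)] := by
  have : (2 : ℕ) = 1 + 1 := rfl
  rw [this, win_succ, win_one]
  rfl

lemma t_gap (hq : StrictMono q) (hqall : ∀ i, t i = true → ∃ n, q n = i) :
    ∀ n p, q n < p → p < q (n+1) → t p = false := by
  intro n p h1 h2
  by_contra h
  have hp : t p = true := by simpa using h
  obtain ⟨m, hm⟩ := hqall p hp
  subst hm
  have l1 : n < m := hq.lt_iff_lt.mp h1
  have l2 : m < n + 1 := hq.lt_iff_lt.mp h2
  omega

lemma mu01 (h00 : ∀ n, t n = true ∨ t (n+1) = true) (hq : StrictMono q)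
    (hqall : ∀ i, t i = true → ∃ n, q n = i)
    (hμ : ∀ n, μ n = q (n+1) - q n - 1) :
    ∀ n, μ n = 0 ∨ μ n = 1 := by
  intro n
  have hlt : q n < q (n+1) := hq (Nat.lt_succ_self n)
  have hle : q (n+1) ≤ q n + 2 := by
    by_contra hcon
    push_neg at hcon
    have e1 : t (q n + 1) = false := t_gap t q hq hqall n _ (by omega) (by omega)
    have e2 : t (q n + 2) = false := t_gap t q hq hqall n _ (by omega) (by omega)
    rcases h00 (q n + 1) with h | h
    · rw [e1] at h; exact Bool.noConfusion h
    · rw [show q n + 1 + 1 = q n + 2 from rfl] at h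
      rw [e2] at h; exact Bool.noConfusion h
  rw [hμ]
  omega

lemma q_succ (hq : StrictMono q) (hμ : ∀ n, μ n = q (n+1) - q n - 1) (n : ℕ) :
    q (n+1) = q n + 1 + μ n := by
  have hlt : q n < q (n+1) := hq (Nat.lt_succ_self n)
  have := hμ n
  omega

/-- key window lemma: the `t`-window starting at `q i` covering the `μ`-window
`win μ i m` is `phib (win μ i m) ++ [true]`. -/
lemma phi_win (h00 : ∀ n, t n = true ∨ t (n+1) = true) (hq : StrictMono q)
    (hq1 : ∀ n, t (q n) = true) (hqall : ∀ i, t i = true → ∃ n, q n = i)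
    (hμ : ∀ n, μ n = q (n+1) - q n - 1) :
    ∀ m i, q (i + m) = q i + (phib (win μ i m)).length ∧
      win t (q i) ((phib (win μ i m)).length + 1) = phib (win μ i m) ++ [true] := by
  intro m
  induction m with
  | zero =>
    intro i
    constructor
    · simp
    · simp [win_one, hq1 i]
  | succ m ih =>
    intro i
    obtain ⟨ih1, ih2⟩ := ih i
    set V := win μ i m with hV
    set L := (phib V).length with hL
    have hwin : win μ i (m+1) = V ++ [μ (i+m)] := win_succ ..
    have hblock : phib (win μ i (m+1)) = phib V ++ blockb (μ (i+m)) := by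
      rw [hwin, phib_append, phib_singleton]
    have hqj : q (i+m) = q i + L := ih1
    have hq1' : q (i+m+1) = q (i+m) + 1 + μ (i+m) := q_succ q μ hq hμ (i+m)
    rcases mu01 t q μ h00 hq hqall hμ (i+m) with h0 | h1
    · -- block [true]
      have hb : blockb (μ (i+m)) = [true] := by simp [blockb, h0]
      have hlen : (phib (win μ i (m+1))).length = L + 1 := by
        rw [hblock, hb]; simp [hL]
      constructor
      · rw [hlen, show i + (m+1) = (i+m)+1 from rfl, hq1', h0, hqj]; omega
      · rw [hlen, hblock, hb]
        rw [show L + 1 + 1 = (L+1) + 1 from rfl, win_succ, ih2]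
        have : t (q i + (L+1)) = true := by
          have : q i + (L + 1) = q (i+m+1) := by omega
          rw [this]; exact hq1 _
        rw [this]
    · -- block [true, false]
      have hb : blockb (μ (i+m)) = [true, false] := by simp [blockb, h1]
      have hlen : (phib (win μ i (m+1))).length = L + 2 := by
        rw [hblock, hb]; simp [hL]
      have hf : t (q i + (L+1)) = false := by
        apply t_gap t q hq hqall (i+m) _ (by omega) (by omega)
      have ht2 : t (q i + (L+2)) = true := by
        have : q i + (L + 2) = q (i+m+1) := by omega
        rw [this]; exact hq1 _
      constructor
      · rw [hlen, show i + (m+1) = (i+m)+1 from rfl, hq1', h1, hqj]; omega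
      · rw [hlen, hblock, hb]
        have e1 : L + 2 + 1 = (L+1) + 2 := by omega
        rw [e1, win_add, ih2, win_two]
        have e2 : q i + (L+1) + 1 = q i + (L+2) := by omega
        rw [e2, hf, ht2]
        simp

end TStruct

section TComb
variable (t : ℕ → Bool) (q : ℕ → ℕ) (μ : ℕ → ℕ)

lemma blockb_ne_nil (a : ℕ) : blockb a ≠ [] := by
  unfold blockb; by_cases h : a = 0 <;> simp [h]

lemma phib_concat_ne_nil (w : List ℕ) (b : ℕ) : phib (w ++ [b]) ≠ [] := by
  rw [phib_append, phib_singleton]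
  intro h
  rcases List.append_eq_nil_iff.mp h with ⟨-, h2⟩
  exact blockb_ne_nil b h2

lemma phib_getLast? (w : List ℕ) (b : ℕ) :
    (phib (w ++ [b])).getLast? = some (if b = 0 then true else false) := by
  rw [phib_append, phib_singleton, List.getLast?_append_of_ne_nil _ (blockb_ne_nil b)]
  unfold blockb
  by_cases h : b = 0 <;> simp [h]

lemma t_rs_unique (hstur : IsSturmian t) {L : ℕ} (hL : 1 ≤ L) {W W' : List Bool}
    (hWl : W.length = L) (hW'l : W'.length = L)
    (h1 : W ++ [true] ∈ factorSet t (L+1)) (h2 : W ++ [false] ∈ factorSet t (L+1))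
    (h3 : W' ++ [true] ∈ factorSet t (L+1)) (h4 : W' ++ [false] ∈ factorSet t (L+1)) :
    W = W' := by
  by_contra hne
  have hfinL : (factorSet t L).Finite :=
    factorSet_finite t Set.univ Set.finite_univ (fun _ => trivial) L
  have hfinL1 : (factorSet t (L+1)).Finite :=
    factorSet_finite t Set.univ Set.finite_univ (fun _ => trivial) (L+1)
  have hmemW : W ∈ factorSet t L := by
    rw [factorSet_eq_image_take]
    refine ⟨W ++ [true], h1, ?_⟩
    rw [← hWl]; exact List.take_left ..
  have hmemW' : W' ∈ factorSet t L := by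
    rw [factorSet_eq_image_take]
    refine ⟨W' ++ [true], h3, ?_⟩
    rw [← hW'l]; exact List.take_left ..
  set A := ext1 t '' factorSet t L with hA
  have hAsub : A ⊆ factorSet t (L+1) := by
    rintro _ ⟨v, hv, rfl⟩; exact ext1_mem t hv
  have hAcard : A.ncard = L + 1 := by
    rw [hA, Set.ncard_image_of_injOn (ext1_injOn t L), hstur L hL]
  set bW := !(t (occ t W + W.length)) with hbW
  set bW' := !(t (occ t W' + W'.length)) with hbW'
  have hextW : W ++ [bW] ∈ factorSet t (L+1) := by
    rcases Bool.eq_false_or_eq_true (t (occ t W + W.length)) with h | h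
    · rw [hbW, h]; simpa using h2
    · rw [hbW, h]; simpa using h1
  have hextW' : W' ++ [bW'] ∈ factorSet t (L+1) := by
    rcases Bool.eq_false_or_eq_true (t (occ t W' + W'.length)) with h | h
    · rw [hbW', h]; simpa using h4
    · rw [hbW', h]; simpa using h3
  have keytake : ∀ (U : List Bool) (c : Bool), U.length = L → (U ++ [c]).take L = U := by
    intro U c hU
    rw [← hU]; exact List.take_left ..
  have hnotW : W ++ [bW] ∉ A := by
    rintro ⟨v, hv, hveq⟩
    have hvl : v.length = L := length_of_mem hv
    have hvW : v = W := by
      have h5 := congrArg (List.take L) hveq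
      rw [show ext1 t v = v ++ [t (occ t v + v.length)] from rfl] at h5
      rw [keytake v _ hvl, keytake W _ hWl] at h5
      exact h5
    rw [show ext1 t v = v ++ [t (occ t v + v.length)] from rfl, hvW] at hveq
    have := List.singleton_inj.mp (List.append_inj_right hveq rfl)
    rw [hbW] at this
    exact (Bool.eq_not_self _).mp this
  have hnotW' : W' ++ [bW'] ∉ A := by
    rintro ⟨v, hv, hveq⟩
    have hvl : v.length = L := length_of_mem hv
    have hvW : v = W' := by
      have h5 := congrArg (List.take L) hveq
      rw [show ext1 t v = v ++ [t (occ t v + v.length)] from rfl] at h5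
      rw [keytake v _ hvl, keytake W' _ hW'l] at h5
      exact h5
    rw [show ext1 t v = v ++ [t (occ t v + v.length)] from rfl, hvW] at hveq
    have := List.singleton_inj.mp (List.append_inj_right hveq rfl)
    rw [hbW'] at this
    exact (Bool.eq_not_self _).mp this
  have hdistinct : W ++ [bW] ≠ W' ++ [bW'] := by
    intro h
    apply hne
    have := congrArg (List.take L) h
    rwa [keytake W _ hWl, keytake W' _ hW'l] at this
  have hsub2 : insert (W ++ [bW]) (insert (W' ++ [bW']) A) ⊆ factorSet t (L+1) := by
    intro w hw
    rcases hw with rfl | hw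
    · exact hextW
    rcases hw with rfl | hw
    · exact hextW'
    · exact hAsub hw
  have hAfin : A.Finite := hfinL.image _
  have hc1 : (insert (W' ++ [bW']) A).ncard = L + 2 := by
    rw [Set.ncard_insert_of_notMem hnotW' hAfin, hAcard]
  have hc2 : (insert (W ++ [bW]) (insert (W' ++ [bW']) A)).ncard = L + 3 := by
    rw [Set.ncard_insert_of_notMem ?_ (hAfin.insert _), hc1]
    intro hmem
    rcases hmem with h | h
    · exact hdistinct h
    · exact hnotW h
  have hle := Set.ncard_le_ncard hsub2 hfinL1
  rw [hstur (L+1) (by omega), hc2] at hle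
  omega

lemma suffix_decode : ∀ (v v' : List ℕ), (∀ a ∈ v, a = 0 ∨ a = 1) → (∀ a ∈ v', a = 0 ∨ a = 1) →
    (phib v' ++ [true]) <:+ (phib v ++ [true]) → v' <:+ v := by
  intro v
  induction v using List.reverseRecOn with
  | nil =>
    intro v' hv hv' h
    obtain ⟨z, hz⟩ := h
    have hlen := congrArg List.length hz
    simp at hlen
    have h0 : phib v' = [] := List.length_eq_zero_iff.mp (by omega)
    rw [phib_eq_nil h0]
  | append_singleton w b ih =>
    intro v' hv hv' h
    cases v' using List.reverseRecOn with
    | nil => exact List.nil_suffix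
    | append_singleton w' b' =>
      obtain ⟨z, hz⟩ := h
      have hz2 : z ++ phib (w' ++ [b']) = phib (w ++ [b]) := by
        have h6 : (z ++ phib (w' ++ [b'])) ++ [true] = phib (w ++ [b]) ++ [true] := by
          rw [List.append_assoc]; exact hz
        have hl6 := congrArg List.length h6
        simp only [List.length_append, List.length_cons, List.length_nil] at hl6
        apply List.append_inj_left h6
        simp only [List.length_append]
        omega
      have hlast : (phib (w ++ [b])).getLast? = (phib (w' ++ [b'])).getLast? := by
        rw [← hz2, List.getLast?_append_of_ne_nil _ (phib_concat_ne_nil w' b')]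
      rw [phib_getLast? w b, phib_getLast? w' b'] at hlast
      have hb := hv b (by simp)
      have hb' := hv' b' (by simp)
      have hbb : b = b' := by
        rcases hb with rfl | rfl <;> rcases hb' with rfl | rfl <;> simp_all
      subst hbb
      have hz3 : z ++ phib w' = phib w := by
        rw [phib_append, phib_append, phib_singleton] at hz2
        have h7 : (z ++ phib w') ++ blockb b = phib w ++ blockb b := by
          rw [List.append_assoc]; exact hz2
        have hl7 := congrArg List.length h7
        simp only [List.length_append, List.length_cons, List.length_nil] at hl7
        apply List.append_inj_left h7
        simp only [List.length_append]
        omega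
      have ihh : w' <:+ w := by
        apply ih w' (fun a ha => hv a (by simp [ha])) (fun a ha => hv' a (by simp [ha]))
        exact ⟨z, by rw [← List.append_assoc, hz3]⟩
      obtain ⟨z', hz'⟩ := ihh
      exact ⟨z', by rw [← List.append_assoc, hz']⟩

lemma mem01 (h00 : ∀ n, t n = true ∨ t (n+1) = true) (hq : StrictMono q)
    (hqall : ∀ i, t i = true → ∃ n, q n = i) (hμ : ∀ n, μ n = q (n+1) - q n - 1)
    {v : List ℕ} {n : ℕ} (hv : v ∈ factorSet μ n) : ∀ a ∈ v, a = 0 ∨ a = 1 := by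
  obtain ⟨i, hi⟩ := mem_factorSet.mp hv
  rw [hi]
  intro a ha
  simp only [win, List.mem_map, List.mem_range] at ha
  obtain ⟨j, -, rfl⟩ := ha
  exact mu01 t q μ h00 hq hqall hμ _

lemma rs_lift0 (h00 : ∀ n, t n = true ∨ t (n+1) = true) (hq : StrictMono q)
    (hq1 : ∀ n, t (q n) = true) (hqall : ∀ i, t i = true → ∃ n, q n = i)
    (hμ : ∀ n, μ n = q (n+1) - q n - 1) {n : ℕ} {w : List ℕ}
    (h : w ++ [0] ∈ factorSet μ (n+1)) :
    (phib w ++ [true]) ++ [true] ∈ factorSet t ((phib w).length + 1 + 1) := by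
  obtain ⟨i, hi⟩ := mem_factorSet.mp h
  have key := (phi_win t q μ h00 hq hq1 hqall hμ (n+1) i).2
  rw [← hi] at key
  have e : phib (w ++ [0]) = phib w ++ [true] := by
    rw [phib_append, phib_singleton]; rfl
  rw [e] at key
  rw [show (phib w ++ [true]).length = (phib w).length + 1 by simp] at key
  exact mem_factorSet.mpr ⟨q i, key.symm⟩

lemma rs_lift1 (h00 : ∀ n, t n = true ∨ t (n+1) = true) (hq : StrictMono q)
    (hq1 : ∀ n, t (q n) = true) (hqall : ∀ i, t i = true → ∃ n, q n = i)
    (hμ : ∀ n, μ n = q (n+1) - q n - 1) {n : ℕ} {w : List ℕ}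
    (h : w ++ [1] ∈ factorSet μ (n+1)) :
    (phib w ++ [true]) ++ [false] ∈ factorSet t ((phib w).length + 1 + 1) := by
  obtain ⟨i, hi⟩ := mem_factorSet.mp h
  have key := (phi_win t q μ h00 hq hq1 hqall hμ (n+1) i).2
  rw [← hi] at key
  have e : phib (w ++ [1]) = phib w ++ [true, false] := by
    rw [phib_append, phib_singleton]; rfl
  rw [e] at key
  rw [show (phib w ++ [true, false]).length = (phib w).length + 2 by simp] at key
  -- key : win t (q i) ((phib w).length + 2 + 1) = phib w ++ [true, false] ++ [true]
  have htake : win t (q i) ((phib w).length + 2) = phib w ++ [true, false] := by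
    have h8 := congrArg (List.take ((phib w).length + 2)) key
    rw [win_take t (q i) (by omega)] at h8
    rw [h8]
    rw [show (phib w ++ [true, false]) ++ [true] = (phib w ++ [true, false]) ++ [true] from rfl]
    rw [show (phib w).length + 2 = (phib w ++ [true, false]).length by simp]
    exact List.take_left ..
  have e2 : phib w ++ [true, false] = (phib w ++ [true]) ++ [false] := by simp
  rw [e2] at htake
  exact mem_factorSet.mpr ⟨q i, htake.symm⟩

lemma no_two_rs_core (hstur : IsSturmian t)
    (h00 : ∀ n, t n = true ∨ t (n+1) = true) (hq : StrictMono q)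
    (hq1 : ∀ n, t (q n) = true) (hqall : ∀ i, t i = true → ∃ n, q n = i)
    (hμ : ∀ n, μ n = q (n+1) - q n - 1) {n : ℕ} {v v' : List ℕ}
    (hv : v ∈ factorSet μ n) (hv' : v' ∈ factorSet μ n) (hvne : v ≠ v')
    (h1 : v ++ [0] ∈ factorSet μ (n+1)) (h2 : v ++ [1] ∈ factorSet μ (n+1))
    (h3 : v' ++ [0] ∈ factorSet μ (n+1)) (h4 : v' ++ [1] ∈ factorSet μ (n+1))
    (hle : (phib v').length ≤ (phib v).length) : False := by
  set W := phib v ++ [true] with hW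
  set W' := phib v' ++ [true] with hW'
  have hWt := rs_lift0 t q μ h00 hq hq1 hqall hμ h1
  have hWf := rs_lift1 t q μ h00 hq hq1 hqall hμ h2
  have hW't := rs_lift0 t q μ h00 hq hq1 hqall hμ h3
  have hW'f := rs_lift1 t q μ h00 hq hq1 hqall hμ h4
  set Lv := (phib v).length + 1 with hLv
  set Lv' := (phib v').length + 1 with hLv'
  have hWlen : W.length = Lv := by simp [hW, hLv]
  have hW'len : W'.length = Lv' := by simp [hW', hLv']
  set k := Lv - Lv' with hk
  set S := W.drop k with hS
  have hSlen : S.length = Lv' := by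
    rw [hS, List.length_drop, hWlen]; omega
  have hS_ext : ∀ b : Bool, W ++ [b] ∈ factorSet t (Lv + 1) → S ++ [b] ∈ factorSet t (Lv' + 1) := by
    intro b hb
    obtain ⟨i, hi⟩ := mem_factorSet.mp hb
    have hdrop : (W ++ [b]).drop k = S ++ [b] := by
      rw [List.drop_append_of_le_length (by omega)]
    have hwin : (win t i (Lv + 1)).drop k = win t (i + k) (Lv + 1 - k) := win_drop ..
    rw [← hi, hdrop] at hwin
    rw [show Lv + 1 - k = Lv' + 1 by omega] at hwin
    exact mem_factorSet.mpr ⟨i + k, hwin⟩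
  have hSW' : S = W' := by
    apply t_rs_unique t hstur (L := Lv') (by omega) hSlen hW'len
    · exact hS_ext true hWt
    · exact hS_ext false hWf
    · exact hW't
    · exact hW'f
  have hsuf : W' <:+ W := by
    rw [← hSW']; exact List.drop_suffix k W
  have hvsuf : v' <:+ v :=
    suffix_decode v v' (mem01 t q μ h00 hq hqall hμ hv) (mem01 t q μ h00 hq hqall hμ hv') hsuf
  have hlen : v'.length = v.length := by
    rw [length_of_mem hv, length_of_mem hv']
  exact hvne (hvsuf.eq_of_length hlen).symm

lemma no_two_rs (hstur : IsSturmian t)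
    (h00 : ∀ n, t n = true ∨ t (n+1) = true) (hq : StrictMono q)
    (hq1 : ∀ n, t (q n) = true) (hqall : ∀ i, t i = true → ∃ n, q n = i)
    (hμ : ∀ n, μ n = q (n+1) - q n - 1) {n : ℕ} {v v' : List ℕ}
    (hv : v ∈ factorSet μ n) (hv' : v' ∈ factorSet μ n) (hvne : v ≠ v')
    (h1 : v ++ [0] ∈ factorSet μ (n+1)) (h2 : v ++ [1] ∈ factorSet μ (n+1))
    (h3 : v' ++ [0] ∈ factorSet μ (n+1)) (h4 : v' ++ [1] ∈ factorSet μ (n+1)) : False := by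
  rcases le_total (phib v').length (phib v).length with h | h
  · exact no_two_rs_core t q μ hstur h00 hq hq1 hqall hμ hv hv' hvne h1 h2 h3 h4 h
  · exact no_two_rs_core t q μ hstur h00 hq hq1 hqall hμ hv' hv (Ne.symm hvne) h3 h4 h1 h2 h

end TComb

section Assemble
variable (t : ℕ → Bool) (q : ℕ → ℕ) (μ : ℕ → ℕ)

lemma t_period_of_mu_period (hq : StrictMono q) (hq1 : ∀ n, t (q n) = true)
    (hqall : ∀ i, t i = true → ∃ n, q n = i) (hμ : ∀ n, μ n = q (n+1) - q n - 1)
    {N P : ℕ} (hP : 1 ≤ P) (hper : ∀ m, N ≤ m → μ (m + P) = μ m) :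
    ∃ M Q, 1 ≤ Q ∧ ∀ p, M ≤ p → t (p + Q) = t p := by
  set Q := q (N + P) - q N with hQdef
  have hq0 : q N ≤ q (N + P) := hq.le_iff_le.mpr (by omega)
  have hQ1 : 1 ≤ Q := by
    have := hq (show N < N + P by omega); omega
  have qQ : ∀ d, q (N + d + P) = q (N + d) + Q := by
    intro d
    induction d with
    | zero => simp only [Nat.add_zero]; omega
    | succ d ih =>
      have e1 : N + (d+1) + P = (N + d + P) + 1 := by omega
      have e2 : N + (d+1) = (N + d) + 1 := by omega
      rw [e1, e2, q_succ q μ hq hμ, q_succ q μ hq hμ, ih, hper (N+d) (by omega)]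
      omega
  refine ⟨q N, Q, hQ1, ?_⟩
  intro p hp
  have hub : ∃ m, p < q m := ⟨p + 1, lt_of_lt_of_le (by omega) hq.le_apply⟩
  have hM := Nat.find_spec hub
  have hM0 : Nat.find hub ≠ 0 := by
    intro h0
    rw [h0] at hM
    have : q 0 ≤ q N := hq.le_iff_le.mpr (by omega)
    omega
  obtain ⟨m, hm⟩ : ∃ m, Nat.find hub = m + 1 := ⟨Nat.find hub - 1, by omega⟩
  rw [hm] at hM
  have hqm : q m ≤ p := by
    have := Nat.find_min hub (show m < Nat.find hub by omega)
    omega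
  have hmN : N ≤ m := by
    by_contra hcon
    push_neg at hcon
    have : q (m+1) ≤ q N := hq.le_iff_le.mpr (by omega)
    omega
  have hqmQ : q (m + P) = q m + Q := by
    have h10 := qQ (m - N)
    rw [show N + (m - N) = m by omega] at h10
    exact h10
  have hqm1Q : q (m + 1 + P) = q (m + 1) + Q := by
    have h10 := qQ (m - N + 1)
    rw [show N + (m - N + 1) = m + 1 by omega] at h10
    exact h10
  rcases Nat.eq_or_lt_of_le hqm with heq | hlt
  · have e3 : p + Q = q (m + P) := by omega
    rw [e3, ← heq, hq1 (m + P), hq1 m]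
  · have h1 : t p = false := t_gap t q hq hqall m p hlt hM
    have h2 : t (p + Q) = false := by
      apply t_gap t q hq hqall (m + P) _ (by omega) ?_
      have e4 : q (m + P + 1) = q (m + 1) + Q := by
        rw [show m + P + 1 = m + 1 + P by omega]; exact hqm1Q
      omega
    rw [h1, h2]

lemma fin_mu (h00 : ∀ n, t n = true ∨ t (n+1) = true) (hq : StrictMono q)
    (hqall : ∀ i, t i = true → ∃ n, q n = i) (hμ : ∀ n, μ n = q (n+1) - q n - 1)
    (m : ℕ) : (factorSet μ m).Finite := by
  apply factorSet_finite μ {0, 1} (Set.toFinite _) _ m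
  intro i
  rcases mu01 t q μ h00 hq hqall hμ i with h | h <;> simp [h]

lemma mu_period_false (hstur : IsSturmian t) (hq : StrictMono q)
    (hq1 : ∀ n, t (q n) = true) (hqall : ∀ i, t i = true → ∃ n, q n = i)
    (hμ : ∀ n, μ n = q (n+1) - q n - 1)
    {N P : ℕ} (hP : 1 ≤ P) (hper : ∀ m, N ≤ m → μ (m + P) = μ m) : False := by
  obtain ⟨M, Q, hQ, htper⟩ := t_period_of_mu_period t q μ hq hq1 hqall hμ hP hper
  have hbound := ncard_le_of_period t hQ htper (M + Q)
  have := hstur (M + Q) (by omega)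
  omega

lemma mu_card_one (hstur : IsSturmian t) (h00 : ∀ n, t n = true ∨ t (n+1) = true)
    (hq : StrictMono q) (hq1 : ∀ n, t (q n) = true)
    (hqall : ∀ i, t i = true → ∃ n, q n = i) (hμ : ∀ n, μ n = q (n+1) - q n - 1) :
    (factorSet μ 1).ncard = 2 := by
  have hfin := fin_mu t q μ h00 hq hqall hμ
  have hup : (factorSet μ 1).ncard ≤ 2 := by
    have hsub : factorSet μ 1 ⊆ {[0], [1]} := by
      intro w hw
      obtain ⟨i, hi⟩ := mem_factorSet.mp hw
      rw [hi, win_one]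
      rcases mu01 t q μ h00 hq hqall hμ i with h | h <;> simp [h]
    have hpair : ({[0], [1]} : Set (List ℕ)).ncard = 2 :=
      Set.ncard_pair (by simp)
    have := Set.ncard_le_ncard hsub (Set.toFinite _)
    omega
  have hlow : ¬ (factorSet μ 1).ncard ≤ 1 := by
    intro hcon
    have hmem : ∀ m, [μ m] ∈ factorSet μ 1 := by
      intro m
      have := win_mem μ m 1
      rwa [win_one] at this
    have hconst : ∀ m, μ (m + 1) = μ m := by
      intro m
      have h5 := (Set.ncard_le_one (hfin 1)).mp hcon _ (hmem (m+1)) _ (hmem m)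
      exact List.singleton_inj.mp h5
    exact mu_period_false t q μ hstur hq hq1 hqall hμ (N := 0) le_rfl
      (fun m _ => hconst m)
  omega

lemma mu_decomp (h00 : ∀ n, t n = true ∨ t (n+1) = true) (hq : StrictMono q)
    (hqall : ∀ i, t i = true → ∃ n, q n = i) (hμ : ∀ n, μ n = q (n+1) - q n - 1)
    {w : List ℕ} {n : ℕ} (hw : w ∈ factorSet μ (n+1))
    (hnot : w ∉ ext1 μ '' factorSet μ n) :
    ∃ v, v ∈ factorSet μ n ∧ (w = v ++ [0] ∨ w = v ++ [1]) ∧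
      v ++ [0] ∈ factorSet μ (n+1) ∧ v ++ [1] ∈ factorSet μ (n+1) ∧
      (ext1 μ v = v ++ [0] ∨ ext1 μ v = v ++ [1]) ∧ w ≠ ext1 μ v := by
  obtain ⟨i, hi⟩ := mem_factorSet.mp hw
  have hsucc : w = win μ i n ++ [μ (i+n)] := by rw [hi, win_succ]
  set v := win μ i n with hv_def
  have hv : v ∈ factorSet μ n := win_mem ..
  have hvl : v.length = n := win_length ..
  have hcan : ext1 μ v ∈ factorSet μ (n+1) := ext1_mem μ hv
  have hcanform : ext1 μ v = v ++ [μ (occ μ v + n)] := by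
    unfold ext1; rw [hvl]
  have hane : μ (i+n) ≠ μ (occ μ v + n) := by
    intro heq
    apply hnot
    exact ⟨v, hv, by rw [hcanform, ← heq, ← hsucc]⟩
  have hwne : w ≠ ext1 μ v := by
    intro heq
    exact hnot ⟨v, hv, heq.symm⟩
  rcases mu01 t q μ h00 hq hqall hμ (i+n) with ha | ha <;>
    rcases mu01 t q μ h00 hq hqall hμ (occ μ v + n) with hc | hc
  · exact absurd (ha.trans hc.symm) hane
  · refine ⟨v, hv, Or.inl (by rw [hsucc, ha]), ?_, ?_, ?_, hwne⟩
    · have h5 := hw; rw [hsucc, ha] at h5; exact h5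
    · have h5 := hcan; rw [hcanform, hc] at h5; exact h5
    · right; rw [hcanform, hc]
  · refine ⟨v, hv, Or.inr (by rw [hsucc, ha]), ?_, ?_, ?_, hwne⟩
    · have h5 := hcan; rw [hcanform, hc] at h5; exact h5
    · have h5 := hw; rw [hsucc, ha] at h5; exact h5
    · left; rw [hcanform, hc]
  · exact absurd (ha.trans hc.symm) hane

lemma mu_step (hstur : IsSturmian t) (h00 : ∀ n, t n = true ∨ t (n+1) = true)
    (hq : StrictMono q) (hq1 : ∀ n, t (q n) = true)
    (hqall : ∀ i, t i = true → ∃ n, q n = i) (hμ : ∀ n, μ n = q (n+1) - q n - 1)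
    {n : ℕ} (hn : 1 ≤ n) :
    (factorSet μ (n+1)).ncard = (factorSet μ n).ncard + 1 := by
  have hfin := fin_mu t q μ h00 hq hqall hμ
  have hlow : (factorSet μ n).ncard < (factorSet μ (n+1)).ncard := by
    rcases Nat.lt_or_ge (factorSet μ n).ncard (factorSet μ (n+1)).ncard with h | h
    · exact h
    · exfalso
      have hdet := det_of_card_le μ (hfin (n+1)) h
      obtain ⟨i, j, hij, hwrep⟩ := exists_win_repeat μ (hfin n)
      have hper := period_of_det μ hn hdet hij hwrep
      exact mu_period_false t q μ hstur hq hq1 hqall hμ (by omega : 1 ≤ j - i) hper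
  have hup : (factorSet μ (n+1)).ncard ≤ (factorSet μ n).ncard + 1 := by
    by_cases hex : ∀ w ∈ factorSet μ (n+1), w ∈ ext1 μ '' factorSet μ n
    · have hsub : factorSet μ (n+1) ⊆ ext1 μ '' factorSet μ n := hex
      have h5 := Set.ncard_le_ncard hsub ((hfin n).image _)
      have h6 := Set.ncard_image_le (s := factorSet μ n) (f := ext1 μ) (hfin n)
      omega
    · push_neg at hex
      obtain ⟨w₀, hw₀, hw₀n⟩ := hex
      obtain ⟨v₀, hv₀, hw₀form, hv₀0, hv₀1, hcan₀, hwne₀⟩ :=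
        mu_decomp t q μ h00 hq hqall hμ hw₀ hw₀n
      have hsub : factorSet μ (n+1) ⊆ insert w₀ (ext1 μ '' factorSet μ n) := by
        intro w hw
        by_contra hcon
        rw [Set.mem_insert_iff] at hcon
        push_neg at hcon
        obtain ⟨hne0, hnot⟩ := hcon
        obtain ⟨v, hv, hwform, hv0, hv1, hcan, hwne⟩ :=
          mu_decomp t q μ h00 hq hqall hμ hw hnot
        have hvne : v ≠ v₀ := by
          intro heq
          subst heq
          -- w and w₀ are both non-canonical extensions of v: so w = w₀
          apply hne0
          rcases hwform with h | h <;> rcases hw₀form with h' | h'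
          · rw [h, h']
          · exfalso
            rcases hcan with hc | hc
            · exact hwne (by rw [h, hc])
            · exact hwne₀ (by rw [h', hc])
          · exfalso
            rcases hcan with hc | hc
            · exact hwne₀ (by rw [h', hc])
            · exact hwne (by rw [h, hc])
          · rw [h, h']
        exact no_two_rs t q μ hstur h00 hq hq1 hqall hμ hv hv₀ hvne hv0 hv1 hv₀0 hv₀1
      have h5 := Set.ncard_le_ncard hsub (((hfin n).image _).insert _)
      have h6 := Set.ncard_insert_le w₀ (ext1 μ '' factorSet μ n)
      have h7 := Set.ncard_image_le (s := factorSet μ n) (f := ext1 μ) (hfin n)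
      omega
  omega

lemma mu_sturmian (hstur : IsSturmian t) (h00 : ∀ n, t n = true ∨ t (n+1) = true)
    (hq : StrictMono q) (hq1 : ∀ n, t (q n) = true)
    (hqall : ∀ i, t i = true → ∃ n, q n = i) (hμ : ∀ n, μ n = q (n+1) - q n - 1) :
    IsSturmian μ := by
  intro n hn
  induction n, hn using Nat.le_induction with
  | base => exact mu_card_one t q μ hstur h00 hq hq1 hqall hμ
  | succ n hn ih =>
    rw [mu_step t q μ hstur h00 hq hq1 hqall hμ hn, ih]

end Assemble

section Part2
variable (t : ℕ → Bool) (q : ℕ → ℕ) (μ : ℕ → ℕ)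

lemma part2 (h00 : ∀ n, t n = true ∨ t (n+1) = true) (hq : StrictMono q)
    (hq1 : ∀ n, t (q n) = true) (hqall : ∀ i, t i = true → ∃ n, q n = i)
    (hμ : ∀ n, μ n = q (n+1) - q n - 1) :
    ∀ m, ∀ i < ((List.range m).flatMap fun j =>
          if μ j = 0 then [1] else [1, 0] : List ℕ).length,
        (if t (q 0 + i) then 1 else 0) =
          ((List.range m).flatMap fun j =>
            if μ j = 0 then ([1] : List ℕ) else [1, 0]).getD i 0 := by
  intro m i hi
  set Wn : List ℕ := (List.range m).flatMap fun j =>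
    if μ j = 0 then ([1] : List ℕ) else [1, 0] with hWn
  set Pb : List Bool := phib (win μ 0 m) with hPb
  have hmap : Wn = Pb.map (fun b => if b then 1 else 0) := by
    rw [hWn, hPb]
    unfold phib win
    rw [List.map_flatMap, List.flatMap_map]
    apply List.flatMap_congr
    intro j _
    simp only [Nat.zero_add]
    unfold blockb
    by_cases h : μ j = 0 <;> simp [h]
  have hlenW : Wn.length = Pb.length := by rw [hmap, List.length_map]
  have hiL : i < Pb.length := by rw [← hlenW]; exact hi
  have key := (phi_win t q μ h00 hq hq1 hqall hμ m 0).2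
  rw [← hPb] at key
  have h9 := congrArg (fun l => l[i]?) key
  have hL1 : (win t (q 0) (Pb.length + 1))[i]? = some (t (q 0 + i)) := by
    simp [win, show i < Pb.length + 1 by omega]
  have hR : (Pb ++ [true])[i]? = Pb[i]? := by
    rw [List.getElem?_append, if_pos hiL]
  rw [hL1, hR] at h9
  have hgetD : Wn.getD i 0 = (Wn[i]?).getD 0 := List.getD_eq_getElem?_getD ..
  rw [hgetD, hmap, List.getElem?_map, ← h9]
  cases htv : t (q 0 + i) <;> simp

end Part2
end StAux

theorem stmt_19 (t : ℕ → Bool) (hstur : IsSturmian t)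
    (h00 : ∀ n, t n = true ∨ t (n + 1) = true)
    -- `q` enumerates the positions of the 1's of `t` in increasing order
    (q : ℕ → ℕ) (hq : StrictMono q) (hq1 : ∀ n, t (q n) = true)
    (hqall : ∀ i, t i = true → ∃ n, q n = i)
    -- `μ n` is the number of 0's between the `n`-th and `(n+1)`-th occurrence of 1 in `t`
    (μ : ℕ → ℕ) (hμ : ∀ n, μ n = q (n + 1) - q n - 1) :
    (∀ n, μ n = 0 ∨ μ n = 1) ∧
      -- `t`, after its first 1, coincides with `φ(μ)` where `φ : 0 ↦ 1, 1 ↦ 10`: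
      (∀ m, ∀ i < ((List.range m).flatMap fun j =>
            if μ j = 0 then [1] else [1, 0] : List ℕ).length,
          (if t (q 0 + i) then 1 else 0) =
            ((List.range m).flatMap fun j =>
              if μ j = 0 then ([1] : List ℕ) else [1, 0]).getD i 0) ∧
      IsSturmian μ :=
  ⟨StAux.mu01 t q μ h00 hq hqall hμ,
   StAux.part2 t q μ h00 hq hq1 hqall hμ,
   StAux.mu_sturmian t q μ hstur h00 hq hq1 hqall hμ⟩
end
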